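/- arXiv:1308.0228 — 7 statements merged into one kernel-verified Lean document; each statement's English description precedes it below -/
import Mathlib

section
/- For all real numbers q > 1 and q′ > 1, and every 1 ≤ n ≤ 2g: det(E⁺(q) + E⁻(q)·Jₙ) = 0 if and only if det(E⁺(q′) + E⁻(q′)·Jₙ) = 0; det(E⁺(q) − E⁻(q)·Jₙ) = 0 if and only if det(E⁺(q′) − E⁻(q′)·Jₙ) = 0; and if det(E⁺(q) − E⁻(q)·Jₙ) ≠ 0 and det(E⁺(q′) − E⁻(q′)·Jₙ) ≠ 0 then δₙ(c; q) = δₙ(c; q′). Here E⁺(q), E⁻(q) denote the matrices built from the vector C determined by the parameter q. In other words, the quantities δₙ(c; q) are independent of the choice of q. -/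
open Matrix Complex

/-- The `(2g+1) × (2g+1)` matrix `E⁺` with (1-based) `(i,j)` entry `C (i - j - g)`. -/
noncomputable def Ep (g : ℕ) (C : ℤ → ℝ) : Matrix (Fin (2*g+1)) (Fin (2*g+1)) ℝ :=
  fun i j => C (((i : ℕ) : ℤ) - ((j : ℕ) : ℤ) - (g : ℤ))

/-- The `(2g+1) × (2g+1)` matrix `E⁻` with (1-based) `(i,j)` entry `C (g - i + j)`. -/
noncomputable def Em (g : ℕ) (C : ℤ → ℝ) : Matrix (Fin (2*g+1)) (Fin (2*g+1)) ℝ :=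
  fun i j => C ((g : ℤ) - ((i : ℕ) : ℤ) + ((j : ℕ) : ℤ))

/-- The `(2g+1) × (2g+1)` matrix `Jₙ` with (1-based) `(i,j)` entry `1` if `i + j = n + 1`,
`0` otherwise. -/
def Jmat (g : ℕ) (n : ℕ) : Matrix (Fin (2*g+1)) (Fin (2*g+1)) ℝ :=
  fun i j => if (i : ℕ) + (j : ℕ) + 1 = n then 1 else 0

/-- The self-reciprocal polynomial `P(x) = Σ_{k=0}^{g-1} c_k (x^{2g-k} + x^k) + c_g x^g`,
viewed as a function on `ℂ`. -/
noncomputable def Pfun (g : ℕ) (c : ℕ → ℝ) (x : ℂ) : ℂ :=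
  ∑ k ∈ Finset.range g, (c k : ℂ) * (x ^ (2*g - k) + x ^ k) + (c g : ℂ) * x ^ g

/-- The vector `C` determined by `q`: `C(m) = c_{g-m} (1 - m log q)` for `0 ≤ m ≤ g`,
`C(-m) = c_{g-m} (1 + m log q)` for `1 ≤ m ≤ g`, and `C(m) = 0` for `|m| > g`. -/
noncomputable def Cq (g : ℕ) (c : ℕ → ℝ) (q : ℝ) : ℤ → ℝ := fun m =>
  if m.natAbs ≤ g then c (g - m.natAbs) * (1 - (m : ℝ) * Real.log q) else 0

/-- `δₙ(c; q)`: the ratio `det(E⁺ + E⁻ Jₙ)/det(E⁺ - E⁻ Jₙ)` times `g log q` if `n` is odd,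
and the plain ratio if `n` is even. -/
noncomputable def deltaq (g : ℕ) (c : ℕ → ℝ) (q : ℝ) (n : ℕ) : ℝ :=
  ((Ep g (Cq g c q) + Em g (Cq g c q) * Jmat g n).det /
   (Ep g (Cq g c q) - Em g (Cq g c q) * Jmat g n).det) *
  (if n % 2 = 1 then (g : ℝ) * Real.log q else 1)

/-- the Toeplitz lower-triangular part -/
noncomputable def Tm (g : ℕ) (c : ℕ → ℝ) : Matrix (Fin (2*g+1)) (Fin (2*g+1)) ℝ :=
  fun i j => if ((((i:ℕ):ℤ) - ((j:ℕ):ℤ) - (g:ℤ)).natAbs ≤ g)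
    then c (g - ((((i:ℕ):ℤ) - ((j:ℕ):ℤ) - (g:ℤ)).natAbs)) else 0

noncomputable def Sm (g : ℕ) (c : ℕ → ℝ) : Matrix (Fin (2*g+1)) (Fin (2*g+1)) ℝ :=
  fun i j => (((((i:ℕ):ℤ) - ((j:ℕ):ℤ) - (g:ℤ)) : ℤ) : ℝ) * Tm g c i j

lemma Ep_decomp (g : ℕ) (c : ℕ → ℝ) (q : ℝ) :
    Ep g (Cq g c q) = Tm g c - Real.log q • Sm g c := by
  ext i j
  simp only [Ep, Cq, Tm, Sm, Matrix.sub_apply, Matrix.smul_apply, smul_eq_mul]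
  by_cases h : ((((i:ℕ):ℤ) - ((j:ℕ):ℤ) - (g:ℤ)).natAbs ≤ g)
  · rw [if_pos h, if_pos h]; ring
  · rw [if_neg h, if_neg h]; ring

lemma Em_decomp (g : ℕ) (c : ℕ → ℝ) (q : ℝ) :
    Em g (Cq g c q) = Tm g c + Real.log q • Sm g c := by
  ext i j
  have hneg : (g:ℤ) - ((i:ℕ):ℤ) + ((j:ℕ):ℤ) = -((((i:ℕ):ℤ) - ((j:ℕ):ℤ) - (g:ℤ))) := by ring
  simp only [Em, Cq, Tm, Sm, Matrix.add_apply, Matrix.smul_apply, smul_eq_mul, hneg,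
    Int.natAbs_neg, Int.cast_neg]
  by_cases h : ((((i:ℕ):ℤ) - ((j:ℕ):ℤ) - (g:ℤ)).natAbs ≤ g)
  · rw [if_pos h, if_pos h]; ring
  · rw [if_neg h, if_neg h]; ring

/-- reversal index -/
def rn (g n : ℕ) (j : Fin (2*g+1)) : Fin (2*g+1) :=
  ⟨(n - 1 - (j:ℕ)) % (2*g+1), Nat.mod_lt _ (by omega)⟩

lemma rn_coe (g n : ℕ) (hn2 : n ≤ 2*g) (j : Fin (2*g+1)) :
    ((rn g n j : ℕ)) = n - 1 - (j:ℕ) := Nat.mod_eq_of_lt (by omega)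

lemma mul_J (g n : ℕ) (hn2 : n ≤ 2*g) (A : Matrix (Fin (2*g+1)) (Fin (2*g+1)) ℝ)
    (i j : Fin (2*g+1)) :
    (A * Jmat g n) i j = if (j:ℕ) + 1 ≤ n then A i (rn g n j) else 0 := by
  rw [Matrix.mul_apply]
  simp only [Jmat, mul_ite, mul_one, mul_zero]
  by_cases hj : (j:ℕ) + 1 ≤ n
  · rw [if_pos hj]
    rw [Finset.sum_eq_single (rn g n j)]
    · rw [if_pos (by rw [rn_coe g n hn2]; omega)]
    · intro k _ hk
      rw [if_neg]
      intro hcon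
      exact hk (Fin.ext (by rw [rn_coe g n hn2]; omega))
    · intro h; exact absurd (Finset.mem_univ _) h
  · rw [if_neg hj]
    apply Finset.sum_eq_zero
    intro k _
    rw [if_neg (by omega)]

lemma J_mul (g n : ℕ) (hn2 : n ≤ 2*g) (A : Matrix (Fin (2*g+1)) (Fin (2*g+1)) ℝ)
    (i j : Fin (2*g+1)) :
    (Jmat g n * A) i j = if (i:ℕ) + 1 ≤ n then A (rn g n i) j else 0 := by
  rw [Matrix.mul_apply]
  simp only [Jmat, ite_mul, one_mul, zero_mul]
  by_cases hi : (i:ℕ) + 1 ≤ n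
  · rw [if_pos hi]
    rw [Finset.sum_eq_single (rn g n i)]
    · rw [if_pos (by rw [rn_coe g n hn2]; omega)]
    · intro k _ hk
      rw [if_neg]
      intro hcon
      exact hk (Fin.ext (by rw [rn_coe g n hn2]; omega))
    · intro h; exact absurd (Finset.mem_univ _) h
  · rw [if_neg hi]
    apply Finset.sum_eq_zero
    intro k _
    rw [if_neg (by omega)]

/-! ### scalar coefficient functions -/

noncomputable def tauN (n : ℕ) (s : ℝ) (j : ℕ) : ℝ :=
  if 2*j+1 < n then s else if j < n ∧ 2*j+1 ≠ n then -s else 0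

noncomputable def eTN (n : ℕ) (s : ℝ) (j : ℕ) : ℝ :=
  if n ≤ j then 1 else if 2*j+1 < n then 1 else if 2*j+1 = n then (1+s)/2 else 0

noncomputable def eSN (n : ℕ) (s : ℝ) (j : ℕ) : ℝ :=
  if n ≤ j then 0 else if 2*j+1 < n then 0 else if 2*j+1 = n then (1-s)/2 else 1

noncomputable def lamN (g n : ℕ) (s L : ℝ) (j : ℕ) : ℝ :=
  if n ≤ j then 1+(g:ℝ)*L else if 2*j+1 < n then 2 else if 2*j+1 = n then (1+s)+(s-1)*L else -2*L

noncomputable def enN (n : ℕ) (j : ℕ) : ℝ := if n ≤ j then 1 else 0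

noncomputable def piN (n : ℕ) (j : ℕ) : ℝ := if j < n ∧ 2*j+1 ≠ n then 1 else 0

/-! ### structural matrices -/

noncomputable def Vm (g n : ℕ) (s : ℝ) : Matrix (Fin (2*g+1)) (Fin (2*g+1)) ℝ :=
  1 + Jmat g n * Matrix.diagonal (fun j : Fin (2*g+1) => tauN n s (j:ℕ))

noncomputable def Z0 (g n : ℕ) (c : ℕ → ℝ) (s : ℝ) : Matrix (Fin (2*g+1)) (Fin (2*g+1)) ℝ :=
  Tm g c * Vm g n s * Matrix.diagonal (fun j : Fin (2*g+1) => eTN n s (j:ℕ))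
  + Sm g c * Vm g n s * Matrix.diagonal (fun j : Fin (2*g+1) => eSN n s (j:ℕ))

noncomputable def Dlam (g n : ℕ) (s L : ℝ) : Matrix (Fin (2*g+1)) (Fin (2*g+1)) ℝ :=
  Matrix.diagonal (fun j : Fin (2*g+1) => lamN g n s L (j:ℕ))

noncomputable def Den (g n : ℕ) : Matrix (Fin (2*g+1)) (Fin (2*g+1)) ℝ :=
  Matrix.diagonal (fun j : Fin (2*g+1) => enN n (j:ℕ))

noncomputable def Nd (g : ℕ) : Matrix (Fin (2*g+1)) (Fin (2*g+1)) ℝ :=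
  Matrix.diagonal (fun i : Fin (2*g+1) => ((i:ℕ):ℝ))

noncomputable def Ym (g : ℕ) (c : ℕ → ℝ) : Matrix (Fin (2*g+1)) (Fin (2*g+1)) ℝ :=
  (Tm g c)⁻¹ * Nd g * Tm g c - Nd g

noncomputable def Um (g n : ℕ) (c : ℕ → ℝ) (L : ℝ) : Matrix (Fin (2*g+1)) (Fin (2*g+1)) ℝ :=
  1 + (-(L/(1+(g:ℝ)*L))) • (Ym g c * Den g n)

noncomputable def Mq (g n : ℕ) (c : ℕ → ℝ) (s L : ℝ) : Matrix (Fin (2*g+1)) (Fin (2*g+1)) ℝ :=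
  (Tm g c - L • Sm g c) + s • ((Tm g c + L • Sm g c) * Jmat g n)

/-! ### triangularity of Tm -/

lemma Tm_lower (g : ℕ) (c : ℕ → ℝ) (i j : Fin (2*g+1)) (hij : (i:ℕ) < (j:ℕ)) :
    Tm g c i j = 0 := by
  have hj := j.2
  rw [Tm, if_neg (by omega)]

lemma Tm_diag (g : ℕ) (c : ℕ → ℝ) (i : Fin (2*g+1)) : Tm g c i i = c 0 := by
  rw [Tm, if_pos (by omega)]
  congr 1
  omega

lemma Tm_blockTri (g : ℕ) (c : ℕ → ℝ) :
    (Tm g c).BlockTriangular ⇑OrderDual.toDual := by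
  intro i j h
  exact Tm_lower g c i j (by exact_mod_cast h)

lemma Tm_det (g : ℕ) (c : ℕ → ℝ) : (Tm g c).det = c 0 ^ (2*g+1) := by
  rw [Matrix.det_of_lowerTriangular _ (Tm_blockTri g c)]
  simp [Tm_diag, Finset.prod_const, Finset.card_univ]

lemma Tm_det_isUnit (g : ℕ) (c : ℕ → ℝ) (hc0 : c 0 ≠ 0) : IsUnit (Tm g c).det := by
  rw [Tm_det]
  exact (pow_ne_zero _ hc0).isUnit

lemma Tinv_lower (g : ℕ) (c : ℕ → ℝ) (hc0 : c 0 ≠ 0) (i j : Fin (2*g+1))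
    (hij : (i:ℕ) < (j:ℕ)) : (Tm g c)⁻¹ i j = 0 := by
  haveI := Matrix.invertibleOfIsUnitDet _ (Tm_det_isUnit g c hc0)
  exact Matrix.blockTriangular_inv_of_blockTriangular (Tm_blockTri g c) (by exact_mod_cast hij)

lemma Tinv_diag_mul (g : ℕ) (c : ℕ → ℝ) (hc0 : c 0 ≠ 0) (j : Fin (2*g+1)) :
    (Tm g c)⁻¹ j j * Tm g c j j = 1 := by
  have h1 : ((Tm g c)⁻¹ * Tm g c) j j = 1 := by
    rw [Matrix.nonsing_inv_mul _ (Tm_det_isUnit g c hc0), Matrix.one_apply_eq]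
  rw [Matrix.mul_apply] at h1
  rw [← h1]
  rw [Finset.sum_eq_single j]
  · intro k _ hk
    rcases Nat.lt_or_ge (k:ℕ) (j:ℕ) with h | h
    · rw [Tm_lower g c k j h, mul_zero]
    · have : (j:ℕ) < (k:ℕ) := by
        rcases Nat.eq_or_lt_of_le h with h' | h'
        · exact absurd (Fin.ext h'.symm) hk
        · exact h'
      rw [Tinv_lower g c hc0 j k this, zero_mul]
  · intro h; exact absurd (Finset.mem_univ _) h

lemma Ym_lower (g : ℕ) (c : ℕ → ℝ) (hc0 : c 0 ≠ 0) (i j : Fin (2*g+1))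
    (hij : (i:ℕ) ≤ (j:ℕ)) : Ym g c i j = 0 := by
  rw [Ym, Matrix.sub_apply]
  have hent : ((Tm g c)⁻¹ * Nd g * Tm g c) i j
      = ∑ p, (Tm g c)⁻¹ i p * ((p:ℕ):ℝ) * Tm g c p j := by
    rw [Matrix.mul_apply]
    congr 1; ext p
    rw [Nd, Matrix.mul_diagonal]
  rcases Nat.eq_or_lt_of_le hij with heq | hlt
  · have hj : i = j := Fin.ext heq
    subst hj
    rw [hent, Finset.sum_eq_single i]
    · rw [Nd, Matrix.diagonal_apply_eq]
      have := Tinv_diag_mul g c hc0 i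
      nlinarith [this]
    · intro k _ hk
      rcases Nat.lt_or_ge (k:ℕ) (i:ℕ) with h | h
      · rw [Tm_lower g c k i h, mul_zero]
      · have : (i:ℕ) < (k:ℕ) := by
          rcases Nat.eq_or_lt_of_le h with h' | h'
          · exact absurd (Fin.ext h'.symm) hk
          · exact h'
        rw [Tinv_lower g c hc0 i k this, zero_mul, zero_mul]
    · intro h; exact absurd (Finset.mem_univ _) h
  · have hz : ∑ p, (Tm g c)⁻¹ i p * ((p:ℕ):ℝ) * Tm g c p j = 0 := by
      apply Finset.sum_eq_zero
      intro p _
      rcases Nat.lt_or_ge (p:ℕ) (j:ℕ) with h | h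
      · rw [Tm_lower g c p j h, mul_zero]
      · rw [Tinv_lower g c hc0 i p (by omega), zero_mul, zero_mul]
    have hne : i ≠ j := fun h => by
      rw [h] at hlt; omega
    rw [hent, hz, Nd, Matrix.diagonal_apply_ne _ hne, sub_zero]

/-! ### apply lemmas -/

lemma mulV_apply (g n : ℕ) (s : ℝ) (hn2 : n ≤ 2*g) (A : Matrix (Fin (2*g+1)) (Fin (2*g+1)) ℝ)
    (i j : Fin (2*g+1)) :
    (A * Vm g n s) i j
      = A i j + (if (j:ℕ) + 1 ≤ n then A i (rn g n j) * tauN n s (j:ℕ) else 0) := by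
  rw [Vm, Matrix.mul_add, Matrix.mul_one, Matrix.add_apply, ← Matrix.mul_assoc,
    Matrix.mul_diagonal, mul_J g n hn2]
  congr 1
  rw [ite_mul, zero_mul]

lemma Mq_apply (g n : ℕ) (c : ℕ → ℝ) (s L : ℝ) (hn2 : n ≤ 2*g) (i j : Fin (2*g+1)) :
    Mq g n c s L i j = Tm g c i j - L * Sm g c i j
      + s * (if (j:ℕ) + 1 ≤ n then Tm g c i (rn g n j) + L * Sm g c i (rn g n j) else 0) := by
  rw [Mq, Matrix.add_apply, Matrix.sub_apply, Matrix.smul_apply, Matrix.smul_apply,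
    mul_J g n hn2, smul_eq_mul, smul_eq_mul]
  refine congrArg (fun z => Tm g c i j - L * Sm g c i j + s * z) ?_
  split_ifs with h
  · rw [Matrix.add_apply, Matrix.smul_apply, smul_eq_mul]
  · rfl

/-- The key entrywise identity -/
lemma key1 (g n : ℕ) (c : ℕ → ℝ) (s L : ℝ) (hn1 : 1 ≤ n) (hn2 : n ≤ 2*g)
    (hs : s = 1 ∨ s = -1) :
    Mq g n c s L * Vm g n s
      = Z0 g n c s * Dlam g n s L - L • ((Sm g c + (g:ℝ) • Tm g c) * Den g n) := by
  have hss : s * s = 1 := by rcases hs with rfl | rfl <;> norm_num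
  ext i j
  rw [mulV_apply g n s hn2, Mq_apply g n c s L hn2]
  rw [Matrix.sub_apply, Matrix.smul_apply, smul_eq_mul, Dlam, Matrix.mul_diagonal,
    Den, Matrix.mul_diagonal, Z0, Matrix.add_apply, Matrix.mul_diagonal, Matrix.mul_diagonal,
    mulV_apply g n s hn2, mulV_apply g n s hn2, Matrix.add_apply, Matrix.smul_apply, smul_eq_mul]
  by_cases hj : n ≤ (j:ℕ)
  · -- case A : j ≥ n
    have h1 : ¬ ((j:ℕ) + 1 ≤ n) := by omega
    have heT : eTN n s (j:ℕ) = 1 := by simp only [eTN]; rw [if_pos hj]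
    have heS : eSN n s (j:ℕ) = 0 := by simp only [eSN]; rw [if_pos hj]
    have hlam : lamN g n s L (j:ℕ) = 1+(g:ℝ)*L := by simp only [lamN]; rw [if_pos hj]
    have hen : enN n (j:ℕ) = 1 := by simp only [enN]; rw [if_pos hj]
    rw [if_neg h1, if_neg h1, if_neg h1, heT, heS, hlam, hen]
    ring
  · have hrc : ((rn g n j : ℕ)) = n - 1 - (j:ℕ) := rn_coe g n hn2 j
    have h1 : (j:ℕ) + 1 ≤ n := by omega
    rw [if_pos h1, if_pos h1, if_pos h1, if_pos h1]
    rw [Mq_apply g n c s L hn2]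
    have h2 : ((rn g n j : ℕ)) + 1 ≤ n := by omega
    rw [if_pos h2]
    have hrr : rn g n (rn g n j) = j := by
      apply Fin.ext
      rw [rn_coe g n hn2, hrc]
      omega
    rw [hrr]
    have hen : enN n (j:ℕ) = 0 := by simp only [enN]; rw [if_neg hj]
    rcases Nat.lt_trichotomy (2*(j:ℕ)+1) n with hlt | heq | hgt
    · -- case B : T-type paired column
      have heT : eTN n s (j:ℕ) = 1 := by simp only [eTN]; rw [if_neg hj, if_pos hlt]
      have heS : eSN n s (j:ℕ) = 0 := by simp only [eSN]; rw [if_neg hj, if_pos hlt]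
      have hlam : lamN g n s L (j:ℕ) = 2 := by simp only [lamN]; rw [if_neg hj, if_pos hlt]
      have htau : tauN n s (j:ℕ) = s := by simp only [tauN]; rw [if_pos hlt]
      rw [heT, heS, hlam, hen, htau]
      rcases hs with rfl | rfl <;> ring
    · -- case C : middle column
      have hrj : rn g n j = j := Fin.ext (by rw [hrc]; omega)
      rw [hrj]
      have heT : eTN n s (j:ℕ) = (1+s)/2 := by
        simp only [eTN]; rw [if_neg hj, if_neg (by omega), if_pos heq]
      have heS : eSN n s (j:ℕ) = (1-s)/2 := by
        simp only [eSN]; rw [if_neg hj, if_neg (by omega), if_pos heq]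
      have hlam : lamN g n s L (j:ℕ) = (1+s)+(s-1)*L := by
        simp only [lamN]; rw [if_neg hj, if_neg (by omega), if_pos heq]
      have htau : tauN n s (j:ℕ) = 0 := by
        simp only [tauN]; rw [if_neg (by omega), if_neg (by omega)]
      rw [heT, heS, hlam, hen, htau]
      rcases hs with rfl | rfl <;> ring
    · -- case D : S-type paired column
      have heT : eTN n s (j:ℕ) = 0 := by
        simp only [eTN]; rw [if_neg hj, if_neg (by omega), if_neg (by omega)]
      have heS : eSN n s (j:ℕ) = 1 := by
        simp only [eSN]; rw [if_neg hj, if_neg (by omega), if_neg (by omega)]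
      have hlam : lamN g n s L (j:ℕ) = -2*L := by
        simp only [lamN]; rw [if_neg hj, if_neg (by omega), if_neg (by omega)]
      have htau : tauN n s (j:ℕ) = -s := by
        simp only [tauN]; rw [if_neg (by omega), if_pos (by omega)]
      rw [heT, heS, hlam, hen, htau]
      rcases hs with rfl | rfl <;> ring

lemma ZL_apply (g n : ℕ) (c : ℕ → ℝ) (s L : ℝ) (hn2 : n ≤ 2*g) (i k : Fin (2*g+1))
    (hk : n ≤ (k:ℕ)) :
    (Z0 g n c s * Dlam g n s L) i k = (1+(g:ℝ)*L) * Tm g c i k := by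
  have h1 : ¬ ((k:ℕ) + 1 ≤ n) := by omega
  rw [Dlam, Matrix.mul_diagonal, Z0, Matrix.add_apply, Matrix.mul_diagonal, Matrix.mul_diagonal,
    mulV_apply g n s hn2, mulV_apply g n s hn2, if_neg h1, if_neg h1]
  have heT : eTN n s (k:ℕ) = 1 := by simp only [eTN]; rw [if_pos hk]
  have heS : eSN n s (k:ℕ) = 0 := by simp only [eSN]; rw [if_pos hk]
  have hlam : lamN g n s L (k:ℕ) = 1+(g:ℝ)*L := by simp only [lamN]; rw [if_pos hk]
  rw [heT, heS, hlam]
  ring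

lemma subA (g n : ℕ) (c : ℕ → ℝ) (s L : ℝ) (hn2 : n ≤ 2*g) (hc0 : c 0 ≠ 0) :
    Z0 g n c s * Dlam g n s L * (Ym g c * Den g n)
      = (1+(g:ℝ)*L) • (Tm g c * (Ym g c * Den g n)) := by
  ext i j
  rw [Matrix.mul_apply, Matrix.smul_apply, Matrix.mul_apply, smul_eq_mul, Finset.mul_sum]
  apply Finset.sum_congr rfl
  intro k _
  by_cases hk : n ≤ (k:ℕ)
  · rw [ZL_apply g n c s L hn2 i k hk]; ring
  · have hzero : (Ym g c * Den g n) k j = 0 := by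
      rw [Den, Matrix.mul_diagonal]
      by_cases hj : n ≤ (j:ℕ)
      · rw [Ym_lower g c hc0 k j (by omega), zero_mul]
      · simp only [enN]; rw [if_neg hj, mul_zero]
    rw [hzero, mul_zero, mul_zero, mul_zero]

lemma NdT_sub (g : ℕ) (c : ℕ → ℝ) :
    Nd g * Tm g c - Tm g c * Nd g = Sm g c + (g:ℝ) • Tm g c := by
  ext i j
  rw [Matrix.sub_apply, Matrix.add_apply, Matrix.smul_apply, smul_eq_mul, Nd,
    Matrix.diagonal_mul, Matrix.mul_diagonal, Sm]
  push_cast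
  ring

lemma key2 (g n : ℕ) (c : ℕ → ℝ) (s L : ℝ) (hn1 : 1 ≤ n) (hn2 : n ≤ 2*g)
    (hs : s = 1 ∨ s = -1) (hc0 : c 0 ≠ 0) (hgl : 1+(g:ℝ)*L ≠ 0) :
    Mq g n c s L * Vm g n s = Z0 g n c s * Dlam g n s L * Um g n c L := by
  rw [Um, Matrix.mul_add, Matrix.mul_one, Matrix.mul_smul, subA g n c s L hn2 hc0,
    smul_smul]
  have hc1 : -(L/(1+(g:ℝ)*L)) * (1+(g:ℝ)*L) = -L := by rw [neg_mul, div_mul_cancel₀ _ hgl]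
  rw [hc1]
  have hTY : Tm g c * (Ym g c * Den g n) = (Sm g c + (g:ℝ) • Tm g c) * Den g n := by
    rw [← Matrix.mul_assoc]
    congr 1
    rw [Ym, Matrix.mul_sub, ← Matrix.mul_assoc, ← Matrix.mul_assoc,
      Matrix.mul_nonsing_inv _ (Tm_det_isUnit g c hc0), Matrix.one_mul]
    exact NdT_sub g c
  rw [hTY, key1 g n c s L hn1 hn2 hs]
  rw [neg_smul, sub_eq_add_neg]

lemma Um_det (g n : ℕ) (c : ℕ → ℝ) (L : ℝ) (hc0 : c 0 ≠ 0) : (Um g n c L).det = 1 := by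
  have hlow : (Um g n c L).BlockTriangular ⇑OrderDual.toDual := by
    intro i j h
    have hij : (i:ℕ) < (j:ℕ) := by exact_mod_cast h
    rw [Um, Matrix.add_apply, Matrix.smul_apply, Den, Matrix.mul_diagonal,
      Matrix.one_apply_ne (by exact fun hcon => by rw [hcon] at hij; omega),
      Ym_lower g c hc0 i j (by omega)]
    simp
  rw [Matrix.det_of_lowerTriangular _ hlow]
  apply Finset.prod_eq_one
  intro i _
  rw [Um, Matrix.add_apply, Matrix.smul_apply, Den, Matrix.mul_diagonal,
    Ym_lower g c hc0 i i (le_refl _), Matrix.one_apply_eq]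
  simp

lemma Vm_det_ne (g n : ℕ) (s : ℝ) (hn2 : n ≤ 2*g) (hs : s = 1 ∨ s = -1) :
    (Vm g n s).det ≠ 0 := by
  set A := Jmat g n * Matrix.diagonal (fun j : Fin (2*g+1) => tauN n s (j:ℕ)) with hA
  set P := Matrix.diagonal (fun j : Fin (2*g+1) => piN n (j:ℕ)) with hP
  have hA_apply : ∀ i j : Fin (2*g+1), A i j
      = if (i:ℕ)+1 ≤ n then (if rn g n i = j then tauN n s ((rn g n i : ℕ)) else 0) else 0 := by
    intro i j
    rw [hA, J_mul g n hn2]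
    by_cases hi : (i:ℕ)+1 ≤ n
    · rw [if_pos hi, if_pos hi, Matrix.diagonal_apply]
    · rw [if_neg hi, if_neg hi]
  have hrn_lt : ∀ i : Fin (2*g+1), (i:ℕ)+1 ≤ n → ((rn g n i : ℕ)) + 1 ≤ n := by
    intro i hi; rw [rn_coe g n hn2]; omega
  have hrr : ∀ i : Fin (2*g+1), (i:ℕ)+1 ≤ n → rn g n (rn g n i) = i := by
    intro i hi
    apply Fin.ext
    rw [rn_coe g n hn2, rn_coe g n hn2]
    omega
  have hA2 : A * A = -P := by
    ext i j
    rw [Matrix.mul_apply, Matrix.neg_apply, hP, Matrix.diagonal_apply]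
    by_cases hi : (i:ℕ)+1 ≤ n
    · rw [Finset.sum_eq_single (rn g n i)]
      · rw [hA_apply, hA_apply, if_pos hi, if_pos (hrn_lt i hi), if_pos rfl, hrr i hi]
        by_cases hij : i = j
        · subst hij
          rw [if_pos rfl, if_pos rfl]
          rcases Nat.lt_trichotomy (2*(i:ℕ)+1) n with hlt | heq | hgt
          · have h1 : tauN n s ((rn g n i : ℕ)) = -s := by
              simp only [tauN]
              rw [if_neg (by rw [rn_coe g n hn2]; omega), if_pos (by rw [rn_coe g n hn2]; omega)]
            have h2 : tauN n s (i:ℕ) = s := by simp only [tauN]; rw [if_pos hlt]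
            have h3 : piN n (i:ℕ) = 1 := by simp only [piN]; rw [if_pos (by omega)]
            rw [h1, h2, h3]
            rcases hs with rfl | rfl <;> norm_num
          · have h2 : tauN n s (i:ℕ) = 0 := by
              simp only [tauN]; rw [if_neg (by omega), if_neg (by omega)]
            have h3 : piN n (i:ℕ) = 0 := by simp only [piN]; rw [if_neg (by omega)]
            rw [h2, h3, mul_zero, neg_zero]
          · have h1 : tauN n s ((rn g n i : ℕ)) = s := by
              simp only [tauN]
              rw [if_pos (by rw [rn_coe g n hn2]; omega)]
            have h2 : tauN n s (i:ℕ) = -s := by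
              simp only [tauN]; rw [if_neg (by omega), if_pos (by omega)]
            have h3 : piN n (i:ℕ) = 1 := by simp only [piN]; rw [if_pos (by omega)]
            rw [h1, h2, h3]
            rcases hs with rfl | rfl <;> norm_num
        · rw [if_neg hij, if_neg hij, mul_zero, neg_zero]
      · intro k _ hk
        rw [hA_apply, if_pos hi, if_neg (fun h => hk h.symm), zero_mul]
      · intro h; exact absurd (Finset.mem_univ _) h
    · have hsum : ∑ k, A i k * A k j = 0 := by
        apply Finset.sum_eq_zero
        intro k _
        rw [hA_apply, if_neg hi, zero_mul]
      rw [hsum]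
      by_cases hij : i = j
      · subst hij
        have h3 : piN n (i:ℕ) = 0 := by simp only [piN]; rw [if_neg (by omega)]
        rw [if_pos rfl, h3, neg_zero]
      · rw [if_neg hij, neg_zero]
  have hAP : A * P = A := by
    ext i j
    rw [hP, Matrix.mul_diagonal, hA_apply]
    by_cases hi : (i:ℕ)+1 ≤ n
    · rw [if_pos hi]
      by_cases hij : rn g n i = j
      · rw [if_pos hij]
        by_cases hτ : ((rn g n i : ℕ)) < n ∧ 2*((rn g n i : ℕ))+1 ≠ n
        · have hpi : piN n (j:ℕ) = 1 := by
            simp only [piN]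
            rw [if_pos (by rw [← hij]; exact hτ)]
          rw [hpi, mul_one]
        · have h0 : tauN n s ((rn g n i : ℕ)) = 0 := by
            simp only [tauN]
            rw [if_neg (by omega), if_neg (by omega)]
          rw [h0, zero_mul]
      · rw [if_neg hij, zero_mul]
    · rw [if_neg hi, zero_mul]
  have hinv : Vm g n s * (1 - (2⁻¹:ℝ) • A - (2⁻¹:ℝ) • P) = 1 := by
    rw [Vm, ← hA]
    rw [Matrix.add_mul, Matrix.one_mul, Matrix.mul_sub, Matrix.mul_sub,
      Matrix.mul_one, Matrix.mul_smul, Matrix.mul_smul, hA2, hAP]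
    rw [smul_neg]
    module
  intro h0
  have := congrArg Matrix.det hinv
  rw [Matrix.det_mul, h0, zero_mul, Matrix.det_one] at this
  exact zero_ne_one this

lemma detLam_s1 (g n : ℕ) (L : ℝ) (hn2 : n ≤ 2*g) :
    (Dlam g n 1 L).det
      = ((2:ℝ)^((n+1)/2) * (-2:ℝ)^(n/2)) * (L^(n/2) * (1+(g:ℝ)*L)^(2*g+1-n)) := by
  rw [Dlam, Matrix.det_diagonal, Fin.prod_univ_eq_prod_range (lamN g n 1 L) (2*g+1),
    Finset.range_eq_Ico, ← Finset.prod_Ico_consecutive (lamN g n 1 L)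
      (Nat.zero_le n) (by omega : n ≤ 2*g+1),
    ← Finset.prod_Ico_consecutive (lamN g n 1 L)
      (Nat.zero_le ((n+1)/2)) (by omega : (n+1)/2 ≤ n)]
  have e1 : ∏ j ∈ Finset.Ico 0 ((n+1)/2), lamN g n 1 L j = 2^((n+1)/2) := by
    rw [Finset.prod_congr rfl (fun j hj => ?_), Finset.prod_const, Nat.card_Ico, Nat.sub_zero]
    rw [Finset.mem_Ico] at hj
    simp only [lamN]
    rcases Nat.lt_or_ge (2*j+1) n with h | h
    · rw [if_neg (by omega), if_pos h]
    · rw [if_neg (by omega), if_neg (by omega), if_pos (by omega)]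
      norm_num
  have e2 : ∏ j ∈ Finset.Ico ((n+1)/2) n, lamN g n 1 L j = (-2*L)^(n/2) := by
    rw [Finset.prod_congr rfl (fun j hj => ?_), Finset.prod_const, Nat.card_Ico]
    · congr 1
      omega
    rw [Finset.mem_Ico] at hj
    simp only [lamN]
    rw [if_neg (by omega), if_neg (by omega), if_neg (by omega)]
  have e3 : ∏ j ∈ Finset.Ico n (2*g+1), lamN g n 1 L j = (1+(g:ℝ)*L)^(2*g+1-n) := by
    rw [Finset.prod_congr rfl (fun j hj => ?_), Finset.prod_const, Nat.card_Ico]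
    rw [Finset.mem_Ico] at hj
    simp only [lamN]
    rw [if_pos (by omega)]
  rw [e1, e2, e3, show ((-2:ℝ)*L) = (-2)*L from rfl, mul_pow]
  ring

lemma detLam_sm1 (g n : ℕ) (L : ℝ) (hn2 : n ≤ 2*g) :
    (Dlam g n (-1) L).det
      = ((2:ℝ)^(n/2) * (-2:ℝ)^((n+1)/2)) * (L^((n+1)/2) * (1+(g:ℝ)*L)^(2*g+1-n)) := by
  rw [Dlam, Matrix.det_diagonal, Fin.prod_univ_eq_prod_range (lamN g n (-1) L) (2*g+1),
    Finset.range_eq_Ico, ← Finset.prod_Ico_consecutive (lamN g n (-1) L)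
      (Nat.zero_le n) (by omega : n ≤ 2*g+1),
    ← Finset.prod_Ico_consecutive (lamN g n (-1) L)
      (Nat.zero_le (n/2)) (by omega : n/2 ≤ n)]
  have e1 : ∏ j ∈ Finset.Ico 0 (n/2), lamN g n (-1) L j = 2^(n/2) := by
    rw [Finset.prod_congr rfl (fun j hj => ?_), Finset.prod_const, Nat.card_Ico, Nat.sub_zero]
    rw [Finset.mem_Ico] at hj
    simp only [lamN]
    rw [if_neg (by omega), if_pos (by omega)]
  have e2 : ∏ j ∈ Finset.Ico (n/2) n, lamN g n (-1) L j = (-2*L)^((n+1)/2) := by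
    rw [Finset.prod_congr rfl (fun j hj => ?_), Finset.prod_const, Nat.card_Ico]
    · congr 1
      omega
    rw [Finset.mem_Ico] at hj
    simp only [lamN]
    rcases Nat.eq_or_lt_of_le (show n ≤ 2*j+1 by omega) with h | h
    · rw [if_neg (by omega), if_neg (by omega), if_pos h.symm]
      norm_num
    · rw [if_neg (by omega), if_neg (by omega), if_neg (by omega)]
  have e3 : ∏ j ∈ Finset.Ico n (2*g+1), lamN g n (-1) L j = (1+(g:ℝ)*L)^(2*g+1-n) := by
    rw [Finset.prod_congr rfl (fun j hj => ?_), Finset.prod_const, Nat.card_Ico]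
    rw [Finset.mem_Ico] at hj
    simp only [lamN]
    rw [if_pos (by omega)]
  rw [e1, e2, e3, show ((-2:ℝ)*L) = (-2)*L from rfl, mul_pow]
  ring

lemma keyDet (g n : ℕ) (c : ℕ → ℝ) (hn1 : 1 ≤ n) (hn2 : n ≤ 2*g) (hc0 : c 0 ≠ 0)
    (s : ℝ) (a : ℕ) (ha : (s = 1 ∧ a = n/2) ∨ (s = -1 ∧ a = (n+1)/2)) :
    ∃ κ : ℝ, ∀ L : ℝ, 0 < L →
      (Mq g n c s L).det = κ * (L^a * (1+(g:ℝ)*L)^(2*g+1-n)) := by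
  have hs : s = 1 ∨ s = -1 := by rcases ha with ⟨h, _⟩ | ⟨h, _⟩; exacts [Or.inl h, Or.inr h]
  rcases ha with ⟨hs1, ha⟩ | ⟨hs1, ha⟩ <;> subst hs1 <;> subst ha
  · refine ⟨(Z0 g n c 1).det * ((2:ℝ)^((n+1)/2) * (-2:ℝ)^(n/2)) / (Vm g n 1).det, ?_⟩
    intro L hL
    have hgl : (0:ℝ) < 1+(g:ℝ)*L := by positivity
    have h2 := key2 g n c 1 L hn1 hn2 hs hc0 (ne_of_gt hgl)
    have hdet := congrArg Matrix.det h2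
    rw [Matrix.det_mul, Matrix.det_mul, Matrix.det_mul, Um_det g n c L hc0, mul_one,
      detLam_s1 g n L hn2] at hdet
    have hV := Vm_det_ne g n 1 hn2 hs
    field_simp
    linear_combination hdet
  · refine ⟨(Z0 g n c (-1)).det * ((2:ℝ)^(n/2) * (-2:ℝ)^((n+1)/2)) / (Vm g n (-1)).det, ?_⟩
    intro L hL
    have hgl : (0:ℝ) < 1+(g:ℝ)*L := by positivity
    have h2 := key2 g n c (-1) L hn1 hn2 hs hc0 (ne_of_gt hgl)
    have hdet := congrArg Matrix.det h2
    rw [Matrix.det_mul, Matrix.det_mul, Matrix.det_mul, Um_det g n c L hc0, mul_one,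
      detLam_sm1 g n L hn2] at hdet
    have hV := Vm_det_ne g n (-1) hn2 hs
    field_simp
    linear_combination hdet

lemma Mplus_eq (g n : ℕ) (c : ℕ → ℝ) (q : ℝ) :
    Ep g (Cq g c q) + Em g (Cq g c q) * Jmat g n = Mq g n c 1 (Real.log q) := by
  rw [Mq, one_smul, ← Ep_decomp, ← Em_decomp]

lemma Mminus_eq (g n : ℕ) (c : ℕ → ℝ) (q : ℝ) :
    Ep g (Cq g c q) - Em g (Cq g c q) * Jmat g n = Mq g n c (-1) (Real.log q) := by
  rw [Mq, neg_one_smul, ← sub_eq_add_neg, ← Ep_decomp, ← Em_decomp]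

theorem stmt6 (g : ℕ) (hg : 1 ≤ g) (c : ℕ → ℝ) (hc0 : c 0 ≠ 0)
    (q q' : ℝ) (hq : 1 < q) (hq' : 1 < q') :
    ∀ n : ℕ, 1 ≤ n → n ≤ 2*g →
      ((Ep g (Cq g c q) + Em g (Cq g c q) * Jmat g n).det = 0 ↔
        (Ep g (Cq g c q') + Em g (Cq g c q') * Jmat g n).det = 0) ∧
      ((Ep g (Cq g c q) - Em g (Cq g c q) * Jmat g n).det = 0 ↔
        (Ep g (Cq g c q') - Em g (Cq g c q') * Jmat g n).det = 0) ∧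
      ((Ep g (Cq g c q) - Em g (Cq g c q) * Jmat g n).det ≠ 0 →
        (Ep g (Cq g c q') - Em g (Cq g c q') * Jmat g n).det ≠ 0 →
        deltaq g c q n = deltaq g c q' n) := by
  intro n hn1 hn2
  obtain ⟨k1, hk1⟩ := keyDet g n c hn1 hn2 hc0 1 (n/2) (Or.inl ⟨rfl, rfl⟩)
  obtain ⟨k2, hk2⟩ := keyDet g n c hn1 hn2 hc0 (-1) ((n+1)/2) (Or.inr ⟨rfl, rfl⟩)
  have hL : 0 < Real.log q := Real.log_pos hq
  have hL' : 0 < Real.log q' := Real.log_pos hq'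
  have hgl : (0:ℝ) < 1+(g:ℝ)*Real.log q := by positivity
  have hgl' : (0:ℝ) < 1+(g:ℝ)*Real.log q' := by positivity
  have e1p : (Ep g (Cq g c q) + Em g (Cq g c q) * Jmat g n).det
      = k1 * ((Real.log q)^(n/2) * (1+(g:ℝ)*Real.log q)^(2*g+1-n)) := by
    rw [Mplus_eq]; exact hk1 _ hL
  have e1p' : (Ep g (Cq g c q') + Em g (Cq g c q') * Jmat g n).det
      = k1 * ((Real.log q')^(n/2) * (1+(g:ℝ)*Real.log q')^(2*g+1-n)) := by
    rw [Mplus_eq]; exact hk1 _ hL'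
  have e1m : (Ep g (Cq g c q) - Em g (Cq g c q) * Jmat g n).det
      = k2 * ((Real.log q)^((n+1)/2) * (1+(g:ℝ)*Real.log q)^(2*g+1-n)) := by
    rw [Mminus_eq]; exact hk2 _ hL
  have e1m' : (Ep g (Cq g c q') - Em g (Cq g c q') * Jmat g n).det
      = k2 * ((Real.log q')^((n+1)/2) * (1+(g:ℝ)*Real.log q')^(2*g+1-n)) := by
    rw [Mminus_eq]; exact hk2 _ hL'
  have hPp : (0:ℝ) < (Real.log q)^(n/2) * (1+(g:ℝ)*Real.log q)^(2*g+1-n) := by positivity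
  have hPp' : (0:ℝ) < (Real.log q')^(n/2) * (1+(g:ℝ)*Real.log q')^(2*g+1-n) := by positivity
  have hPm : (0:ℝ) < (Real.log q)^((n+1)/2) * (1+(g:ℝ)*Real.log q)^(2*g+1-n) := by positivity
  have hPm' : (0:ℝ) < (Real.log q')^((n+1)/2) * (1+(g:ℝ)*Real.log q')^(2*g+1-n) := by
    positivity
  have hiff : ∀ (k : ℝ) (P : ℝ), 0 < P → (k * P = 0 ↔ k = 0) := by
    intro k P hP
    constructor
    · intro h
      rcases mul_eq_zero.mp h with h | h
      · exact h
      · exact absurd h (ne_of_gt hP)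
    · intro h; rw [h, zero_mul]
  refine ⟨?_, ?_, ?_⟩
  · rw [e1p, e1p', hiff _ _ hPp, hiff _ _ hPp']
  · rw [e1m, e1m', hiff _ _ hPm, hiff _ _ hPm']
  · intro hne hne'
    have hk2ne : k2 ≠ 0 := by
      intro h
      exact hne (by rw [e1m, h, zero_mul])
    have hLne := ne_of_gt hL
    have hL'ne := ne_of_gt hL'
    have hBne := ne_of_gt hgl
    have hB'ne := ne_of_gt hgl'
    have hBpne : ((1+(g:ℝ)*Real.log q)^(2*g+1-n)) ≠ 0 := pow_ne_zero _ hBne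
    have hBp'ne : ((1+(g:ℝ)*Real.log q')^(2*g+1-n)) ≠ 0 := pow_ne_zero _ hB'ne
    simp only [deltaq]
    rw [e1p, e1p', e1m, e1m']
    rcases Nat.mod_two_eq_zero_or_one n with hpar | hpar
    · rw [if_neg (show ¬ n % 2 = 1 by omega), if_neg (show ¬ n % 2 = 1 by omega),
        show (n+1)/2 = n/2 from by omega]
      field_simp
    · rw [if_pos hpar, if_pos hpar, show (n+1)/2 = n/2 + 1 from by omega, pow_succ, pow_succ]
      field_simp
end

section
/- Let A_q(z) = exp(−i·g·z·log q)·P(exp(i·z·log q)), B_q(z) = −A_q′(z), and E_q = A_q − i·B_q. Then E_q belongs to the Hermite–Biehler class if and only if every zero of A_q is real and simple (i.e., A_q(ρ) = 0 implies ρ ∈ ℝ and A_q′(ρ) ≠ 0). -/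
open Complex

/-- `A_q(z) = exp(-i g z log q) · P(exp(i z log q))`. -/
noncomputable def Aq (g : ℕ) (c : ℕ → ℝ) (q : ℝ) (z : ℂ) : ℂ :=
  Complex.exp (-(Complex.I * (g : ℂ) * z * (Real.log q : ℂ))) *
    Pfun g c (Complex.exp (Complex.I * z * (Real.log q : ℂ)))

/-- `B_q(z) = -A_q'(z)`. -/
noncomputable def Bq (g : ℕ) (c : ℕ → ℝ) (q : ℝ) (z : ℂ) : ℂ :=
  -(deriv (Aq g c q) z)

/-- An entire function `F` belongs to the Hermite–Biehler class if `|F♯(z)| < |F(z)|`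
for every `z` in the open upper half-plane, where `F♯(z) = conj (F (conj z))`, and `F`
has no zeros on the real axis. -/
def HermiteBiehler (F : ℂ → ℂ) : Prop :=
  Differentiable ℂ F ∧
  (∀ z : ℂ, 0 < z.im →
    ‖(starRingEnd ℂ) (F ((starRingEnd ℂ) z))‖ < ‖F z‖) ∧
  ∀ x : ℝ, F (x : ℂ) ≠ 0

/-! ### Auxiliary definitions -/

/-- The polynomial `Q(X) = Σ_{k<g} c_k (X^{2g-k} + X^k) + c_g X^g` over `ℂ`. -/
noncomputable def Qpoly (g : ℕ) (c : ℕ → ℝ) : Polynomial ℂ :=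
  ∑ k ∈ Finset.range g,
      Polynomial.C (c k : ℂ) * (Polynomial.X ^ (2*g - k) + Polynomial.X ^ k) +
    Polynomial.C (c g : ℂ) * Polynomial.X ^ g

/-- The explicit derivative of `Aq` as an exponential sum. -/
noncomputable def Dfun (g : ℕ) (c : ℕ → ℝ) (q : ℝ) (z : ℂ) : ℂ :=
  ∑ k ∈ Finset.range g,
    (c k : ℂ) * (Complex.I * ((g - k : ℕ) : ℂ) * (Real.log q : ℂ)) *
      (Complex.exp (Complex.I * ((g - k : ℕ) : ℂ) * (Real.log q : ℂ) * z) -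
       Complex.exp (-(Complex.I * ((g - k : ℕ) : ℂ) * (Real.log q : ℂ) * z)))

lemma Pfun_eval (g : ℕ) (c : ℕ → ℝ) (x : ℂ) : Pfun g c x = (Qpoly g c).eval x := by
  simp [Pfun, Qpoly, Polynomial.eval_finset_sum]

lemma Aq_hasDerivAt (g : ℕ) (c : ℕ → ℝ) (q : ℝ) (z : ℂ) :
    HasDerivAt (Aq g c q)
      (Complex.I * (Real.log q : ℂ) * Complex.exp (-(Complex.I * (g : ℂ) * z * (Real.log q : ℂ))) *
        (Complex.exp (Complex.I * z * (Real.log q : ℂ)) *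
            (Qpoly g c).derivative.eval (Complex.exp (Complex.I * z * (Real.log q : ℂ))) -
          (g : ℂ) * (Qpoly g c).eval (Complex.exp (Complex.I * z * (Real.log q : ℂ))))) z := by
  have hAq : Aq g c q = fun z => Complex.exp (-(Complex.I * (g : ℂ) * (Real.log q : ℂ)) * z) *
      (Qpoly g c).eval (Complex.exp ((Complex.I * (Real.log q : ℂ)) * z)) := by
    funext z
    rw [Aq, Pfun_eval]
    congr 2
    · ring
    · congr 1; ring
  have h1 : HasDerivAt (fun z : ℂ => Complex.exp (-(Complex.I * (g:ℂ) * (Real.log q:ℂ)) * z))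
      (Complex.exp (-(Complex.I * (g:ℂ) * (Real.log q:ℂ)) * z) *
        (-(Complex.I * (g:ℂ) * (Real.log q:ℂ)))) z := by
    simpa using ((hasDerivAt_id z).const_mul (-(Complex.I * (g:ℂ) * (Real.log q:ℂ)))).cexp
  have hw : HasDerivAt (fun z : ℂ => Complex.exp ((Complex.I * (Real.log q:ℂ)) * z))
      (Complex.exp ((Complex.I * (Real.log q:ℂ)) * z) * (Complex.I * (Real.log q:ℂ))) z := by
    simpa using ((hasDerivAt_id z).const_mul (Complex.I * (Real.log q:ℂ))).cexp
  have h2 := ((Qpoly g c).hasDerivAt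
      (Complex.exp ((Complex.I * (Real.log q:ℂ)) * z))).comp z hw
  have h3 := h1.mul h2
  rw [hAq]
  refine h3.congr_deriv ?_
  rw [show -(Complex.I * (g:ℂ) * z * (Real.log q:ℂ))
      = -(Complex.I * (g:ℂ) * (Real.log q:ℂ)) * z by ring,
    show Complex.I * z * (Real.log q:ℂ) = (Complex.I * (Real.log q:ℂ)) * z by ring]
  simp only [Function.comp_apply]
  ring

lemma Aq_eq_sum (g : ℕ) (c : ℕ → ℝ) (q : ℝ) (z : ℂ) :
    Aq g c q z = (∑ k ∈ Finset.range g,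
      (c k : ℂ) * (Complex.exp (Complex.I * ((g - k : ℕ) : ℂ) * (Real.log q : ℂ) * z) +
        Complex.exp (-(Complex.I * ((g - k : ℕ) : ℂ) * (Real.log q : ℂ) * z)))) + (c g : ℂ) := by
  rw [Aq, Pfun, mul_add, Finset.mul_sum]
  congr 1
  · apply Finset.sum_congr rfl
    intro k hk
    have hk' : k < g := Finset.mem_range.mp hk
    have e1 : Complex.exp (-(Complex.I * (g:ℂ) * z * (Real.log q:ℂ))) *
        Complex.exp (Complex.I * z * (Real.log q:ℂ)) ^ (2*g-k)
        = Complex.exp (Complex.I * ((g-k:ℕ):ℂ) * (Real.log q:ℂ) * z) := by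
      rw [← Complex.exp_nat_mul, ← Complex.exp_add]
      congr 1
      push_cast [Nat.cast_sub (show k ≤ 2*g by omega), Nat.cast_sub (show k ≤ g by omega)]
      ring
    have e2 : Complex.exp (-(Complex.I * (g:ℂ) * z * (Real.log q:ℂ))) *
        Complex.exp (Complex.I * z * (Real.log q:ℂ)) ^ k
        = Complex.exp (-(Complex.I * ((g-k:ℕ):ℂ) * (Real.log q:ℂ) * z)) := by
      rw [← Complex.exp_nat_mul, ← Complex.exp_add]
      congr 1
      push_cast [Nat.cast_sub (show k ≤ g by omega)]
      ring
    calc Complex.exp (-(Complex.I * (g:ℂ) * z * (Real.log q:ℂ))) *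
          ((c k:ℂ) * (Complex.exp (Complex.I * z * (Real.log q:ℂ)) ^ (2*g-k) +
            Complex.exp (Complex.I * z * (Real.log q:ℂ)) ^ k))
        = (c k:ℂ) * (Complex.exp (-(Complex.I * (g:ℂ) * z * (Real.log q:ℂ))) *
            Complex.exp (Complex.I * z * (Real.log q:ℂ)) ^ (2*g-k) +
          Complex.exp (-(Complex.I * (g:ℂ) * z * (Real.log q:ℂ))) *
            Complex.exp (Complex.I * z * (Real.log q:ℂ)) ^ k) := by ring
      _ = _ := by rw [e1, e2]
  · have e3 : Complex.exp (-(Complex.I * (g:ℂ) * z * (Real.log q:ℂ))) *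
        Complex.exp (Complex.I * z * (Real.log q:ℂ)) ^ g = 1 := by
      rw [← Complex.exp_nat_mul, ← Complex.exp_add,
        show -(Complex.I * (g:ℂ) * z * (Real.log q:ℂ)) + (g:ℂ) * (Complex.I * z * (Real.log q:ℂ))
          = 0 by ring, Complex.exp_zero]
    calc Complex.exp (-(Complex.I * (g:ℂ) * z * (Real.log q:ℂ))) *
          ((c g:ℂ) * Complex.exp (Complex.I * z * (Real.log q:ℂ)) ^ g)
        = (c g:ℂ) * (Complex.exp (-(Complex.I * (g:ℂ) * z * (Real.log q:ℂ))) *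
            Complex.exp (Complex.I * z * (Real.log q:ℂ)) ^ g) := by ring
      _ = (c g:ℂ) := by rw [e3, mul_one]

lemma Aq_hasDerivAt_sum (g : ℕ) (c : ℕ → ℝ) (q : ℝ) (z : ℂ) :
    HasDerivAt (Aq g c q) (Dfun g c q z) z := by
  have hfun : Aq g c q = fun z => (∑ k ∈ Finset.range g,
      (c k : ℂ) * (Complex.exp (Complex.I * ((g - k : ℕ) : ℂ) * (Real.log q : ℂ) * z) +
        Complex.exp (-(Complex.I * ((g - k : ℕ) : ℂ) * (Real.log q : ℂ) * z)))) + (c g : ℂ) :=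
    funext (Aq_eq_sum g c q)
  rw [hfun, Dfun]
  apply HasDerivAt.add_const
  apply HasDerivAt.fun_sum
  intro k hk
  set a : ℂ := Complex.I * ((g-k:ℕ):ℂ) * (Real.log q:ℂ) with ha
  have h1 : HasDerivAt (fun z : ℂ => Complex.exp (a*z)) (Complex.exp (a*z) * a) z := by
    simpa using ((hasDerivAt_id z).const_mul a).cexp
  have h2 : HasDerivAt (fun z : ℂ => Complex.exp (-(a*z))) (Complex.exp (-(a*z)) * -a) z := by
    have := ((hasDerivAt_id z).const_mul (-a)).cexp
    simpa [neg_mul] using this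
  have h3 := (h1.add h2).const_mul (c k : ℂ)
  have hax : ∀ w : ℂ, Complex.I * ((g-k:ℕ):ℂ) * (Real.log q:ℂ) * w = a * w := fun w => rfl
  simp only [hax] at *
  refine h3.congr_deriv ?_
  ring

lemma deriv_Aq (g : ℕ) (c : ℕ → ℝ) (q : ℝ) : deriv (Aq g c q) = Dfun g c q :=
  funext fun z => (Aq_hasDerivAt_sum g c q z).deriv

lemma Aq_conj (g : ℕ) (c : ℕ → ℝ) (q : ℝ) (z : ℂ) :
    (starRingEnd ℂ) (Aq g c q ((starRingEnd ℂ) z)) = Aq g c q z := by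
  simp only [Aq_eq_sum, map_add, map_sum, map_mul, map_neg, Complex.conj_conj, Complex.conj_I,
    Complex.conj_ofReal, map_natCast, ← Complex.exp_conj, neg_mul, neg_neg]
  congr 1
  exact Finset.sum_congr rfl fun k _ => by ring

lemma Dfun_conj (g : ℕ) (c : ℕ → ℝ) (q : ℝ) (z : ℂ) :
    (starRingEnd ℂ) (Dfun g c q ((starRingEnd ℂ) z)) = Dfun g c q z := by
  simp only [Dfun, map_sum, map_mul, map_sub, map_neg, Complex.conj_conj, Complex.conj_I,
    Complex.conj_ofReal, map_natCast, ← Complex.exp_conj, neg_mul, neg_neg]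
  exact Finset.sum_congr rfl fun k _ => by ring

lemma Dfun_differentiable (g : ℕ) (c : ℕ → ℝ) (q : ℝ) : Differentiable ℂ (Dfun g c q) := by
  unfold Dfun
  fun_prop

lemma Qpoly_coeff (g : ℕ) (hg : 1 ≤ g) (c : ℕ → ℝ) : (Qpoly g c).coeff (2*g) = (c 0 : ℂ) := by
  rw [Qpoly, Polynomial.coeff_add, Polynomial.finset_sum_coeff]
  simp only [Polynomial.coeff_C_mul, Polynomial.coeff_add, Polynomial.coeff_X_pow]
  rw [Finset.sum_eq_single 0 (fun b hb hb0 => by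
    have := Finset.mem_range.mp hb
    rw [if_neg (by omega), if_neg (by omega)]
    simp) (fun h => absurd (Finset.mem_range.mpr (by omega)) h)]
  rw [if_pos (by omega), if_neg (by omega), if_neg (by omega)]
  simp

lemma Qpoly_natDegree (g : ℕ) (hg : 1 ≤ g) (c : ℕ → ℝ) (hc0 : c 0 ≠ 0) :
    (Qpoly g c).natDegree = 2*g := by
  apply le_antisymm
  · rw [Qpoly]
    apply (Polynomial.natDegree_add_le _ _).trans
    apply max_le
    · apply Polynomial.natDegree_sum_le_of_forall_le
      intro k hk
      apply (Polynomial.natDegree_C_mul_le _ _).trans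
      apply (Polynomial.natDegree_add_le _ _).trans
      apply max_le <;> rw [Polynomial.natDegree_X_pow] <;> [omega; exact (Finset.mem_range.mp hk).le.trans (by omega)]
    · apply (Polynomial.natDegree_C_mul_le _ _).trans
      rw [Polynomial.natDegree_X_pow]; omega
  · apply Polynomial.le_natDegree_of_ne_zero
    rw [Qpoly_coeff g hg c]
    exact_mod_cast hc0

lemma Qpoly_eval_zero (g : ℕ) (hg : 1 ≤ g) (c : ℕ → ℝ) : (Qpoly g c).eval 0 = (c 0 : ℂ) := by
  rw [Qpoly, Polynomial.eval_add, Polynomial.eval_finset_sum]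
  rw [Finset.sum_eq_single 0 (fun b hb hb0 => by
      have := Finset.mem_range.mp hb
      simp [zero_pow (show 2*g-b ≠ 0 by omega), zero_pow hb0])
    (fun h => absurd (Finset.mem_range.mpr (by omega)) h)]
  simp [zero_pow (show 2*g-0 ≠ 0 by omega), zero_pow (show g ≠ 0 by omega), zero_pow (show 2*g ≠ 0 by omega)]

lemma Qpoly_factor (g : ℕ) (hg : 1 ≤ g) (c : ℕ → ℝ) (hc0 : c 0 ≠ 0) :
    Qpoly g c = Polynomial.C ((c 0 : ℂ)) *
      ((Qpoly g c).roots.map (fun a => Polynomial.X - Polynomial.C a)).prod := by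
  have hs : Polynomial.Splits (Qpoly g c) := IsAlgClosed.splits _
  have := Polynomial.Splits.eq_prod_roots hs
  rwa [Polynomial.leadingCoeff, Qpoly_natDegree g hg c hc0, Qpoly_coeff g hg c] at this

lemma Qpoly_roots_card (g : ℕ) (hg : 1 ≤ g) (c : ℕ → ℝ) (hc0 : c 0 ≠ 0) :
    Multiset.card (Qpoly g c).roots = 2*g := by
  have hs : Polynomial.Splits (Qpoly g c) := IsAlgClosed.splits _
  rw [Polynomial.splits_iff_card_roots.mp hs, Qpoly_natDegree g hg c hc0]

/-- Under the hypothesis that every zero of `Aq` is real, all roots of `Qpoly` lie on the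
unit circle. -/
lemma Qpoly_roots_abs (g : ℕ) (hg : 1 ≤ g) (q : ℝ) (hq : 1 < q) (c : ℕ → ℝ) (hc0 : c 0 ≠ 0)
    (hroot : ∀ ρ : ℂ, Aq g c q ρ = 0 → ρ.im = 0) :
    ∀ r ∈ (Qpoly g c).roots, ‖r‖ = 1 := by
  intro r hr
  have hL : (0:ℝ) < Real.log q := Real.log_pos hq
  have hQr : (Qpoly g c).eval r = 0 := (Polynomial.isRoot_of_mem_roots hr)
  have hr0 : r ≠ 0 := by
    rintro rfl
    rw [Qpoly_eval_zero g hg c] at hQr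
    exact hc0 (by exact_mod_cast hQr)
  set z : ℂ := Complex.log r / (Complex.I * (Real.log q:ℂ)) with hz
  have hIL : Complex.I * (Real.log q:ℂ) ≠ 0 :=
    mul_ne_zero Complex.I_ne_zero (by exact_mod_cast hL.ne')
  have harg : Complex.I * z * (Real.log q:ℂ) = Complex.log r := by
    rw [hz]; field_simp
    rw [mul_div_assoc, div_self (by exact_mod_cast hL.ne'), mul_one]
  have hexp : Complex.exp (Complex.I * z * (Real.log q:ℂ)) = r := by
    rw [harg]; exact Complex.exp_log hr0
  have hAz : Aq g c q z = 0 := by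
    rw [Aq, Pfun_eval, hexp, hQr, mul_zero]
  have him := hroot z hAz
  rw [← hexp, Complex.norm_exp]
  have hre : (Complex.I * z * (Real.log q:ℂ)).re = 0 := by
    simp [Complex.mul_re, Complex.mul_im, him]
  rw [hre, Real.exp_zero]

lemma re_div_lt_half {w a : ℂ} (hw : ‖w‖ < 1) (ha : ‖a‖ = 1) :
    (w / (w - a)).re < 1/2 := by
  have hw2 : w.re^2 + w.im^2 < 1 := by
    have h1 : ‖w‖ ^ 2 < 1 := by nlinarith [norm_nonneg w]
    rw [Complex.sq_norm, Complex.normSq_apply] at h1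
    nlinarith [h1]
  have ha2 : a.re^2 + a.im^2 = 1 := by
    have h1 : ‖a‖ ^ 2 = 1 := by rw [ha]; norm_num
    rw [Complex.sq_norm, Complex.normSq_apply] at h1
    nlinarith [h1]
  have hd : w - a ≠ 0 := sub_ne_zero.mpr (fun h => by rw [h, ha] at hw; exact lt_irrefl 1 hw)
  have hn : 0 < Complex.normSq (w-a) := Complex.normSq_pos.mpr hd
  rw [Complex.div_re, ← add_div, div_lt_iff₀ hn]
  simp only [Complex.sub_re, Complex.sub_im, Complex.normSq_apply] at *
  nlinarith [hw2, ha2]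

lemma eval_prod_ne_zero {w : ℂ} (hw : ‖w‖ < 1) (R : Multiset ℂ)
    (hR : ∀ r ∈ R, ‖r‖ = 1) :
    ((R.map (fun r => Polynomial.X - Polynomial.C r)).prod).eval w ≠ 0 := by
  rw [Polynomial.eval_multiset_prod, Multiset.map_map]
  apply Multiset.prod_ne_zero
  simp only [Multiset.mem_map, Function.comp_apply, Polynomial.eval_sub, Polynomial.eval_X,
    Polynomial.eval_C]
  rintro ⟨r, hrR, hr⟩
  have : w = r := by rw [← sub_eq_zero]; exact hr
  rw [this, hR r hrR] at hw
  exact lt_irrefl 1 hw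

lemma logderiv_cons {w : ℂ} (hw : ‖w‖ < 1) {a : ℂ} {s : Multiset ℂ}
    (ha : ‖a‖ = 1) (hs : ∀ r ∈ s, ‖r‖ = 1) :
    (w * (Polynomial.derivative
        (((a ::ₘ s).map (fun r => Polynomial.X - Polynomial.C r)).prod)).eval w /
      (((a ::ₘ s).map (fun r => Polynomial.X - Polynomial.C r)).prod).eval w)
    = w / (w - a) +
      w * (Polynomial.derivative ((s.map (fun r => Polynomial.X - Polynomial.C r)).prod)).eval w /
        ((s.map (fun r => Polynomial.X - Polynomial.C r)).prod).eval w := by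
  have hPs := eval_prod_ne_zero hw s hs
  have hwa : w - a ≠ 0 := sub_ne_zero.mpr (fun h => by rw [h, ha] at hw; exact lt_irrefl 1 hw)
  rw [Multiset.map_cons, Multiset.prod_cons, Polynomial.derivative_mul,
    Polynomial.derivative_X_sub_C, one_mul, Polynomial.eval_add, Polynomial.eval_mul,
    Polynomial.eval_mul, Polynomial.eval_sub, Polynomial.eval_X, Polynomial.eval_C]
  field_simp

lemma logderiv_le {w : ℂ} (hw : ‖w‖ < 1) (R : Multiset ℂ)
    (hR : ∀ r ∈ R, ‖r‖ = 1) :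
    (w * (Polynomial.derivative ((R.map (fun r => Polynomial.X - Polynomial.C r)).prod)).eval w /
      ((R.map (fun r => Polynomial.X - Polynomial.C r)).prod).eval w).re
      ≤ (Multiset.card R : ℝ) / 2 := by
  induction R using Multiset.induction_on with
  | empty => simp
  | cons a s ih =>
    have ha : ‖a‖ = 1 := hR a (Multiset.mem_cons_self a s)
    have hs : ∀ r ∈ s, ‖r‖ = 1 := fun r hr => hR r (Multiset.mem_cons_of_mem hr)
    rw [logderiv_cons hw ha hs, Complex.add_re, Multiset.card_cons]
    have h1 := re_div_lt_half hw ha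
    have h2 := ih hs
    push_cast
    linarith

lemma logderiv_lt {w : ℂ} (hw : ‖w‖ < 1) (R : Multiset ℂ)
    (hR : ∀ r ∈ R, ‖r‖ = 1) (hcard : 0 < Multiset.card R) :
    (w * (Polynomial.derivative ((R.map (fun r => Polynomial.X - Polynomial.C r)).prod)).eval w /
      ((R.map (fun r => Polynomial.X - Polynomial.C r)).prod).eval w).re
      < (Multiset.card R : ℝ) / 2 := by
  obtain ⟨a, ha⟩ := Multiset.exists_mem_of_ne_zero
    (show R ≠ 0 by rintro rfl; simp at hcard)
  obtain ⟨s, rfl⟩ : ∃ s, R = a ::ₘ s := ⟨R.erase a, (Multiset.cons_erase ha).symm⟩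
  have ha1 : ‖a‖ = 1 := hR a (Multiset.mem_cons_self a s)
  have hs : ∀ r ∈ s, ‖r‖ = 1 := fun r hr => hR r (Multiset.mem_cons_of_mem hr)
  rw [logderiv_cons hw ha1 hs, Complex.add_re, Multiset.card_cons]
  have h1 := re_div_lt_half hw ha1
  have h2 := logderiv_le hw s hs
  push_cast
  linarith

lemma abs_one_add_lt {v : ℂ} (hv : v.re < 0) :
    ‖1 + v‖ < ‖1 - v‖ := by
  have h1 : Complex.normSq (1+v) < Complex.normSq (1-v) := by
    rw [Complex.normSq_add, Complex.normSq_sub]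
    have : (1 * (starRingEnd ℂ) v).re = v.re := by simp
    rw [this]
    linarith
  rw [Complex.norm_def, Complex.norm_def]
  exact Real.sqrt_lt_sqrt (Complex.normSq_nonneg _) h1

theorem stmt10 (g : ℕ) (hg : 1 ≤ g) (q : ℝ) (hq : 1 < q) (c : ℕ → ℝ) (hc0 : c 0 ≠ 0) :
    HermiteBiehler (fun z => Aq g c q z - Complex.I * Bq g c q z) ↔
    (∀ ρ : ℂ, Aq g c q ρ = 0 → ρ.im = 0 ∧ deriv (Aq g c q) ρ ≠ 0) := by
  have hL : (0:ℝ) < Real.log q := Real.log_pos hq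
  have hEdef : ∀ z, Aq g c q z - Complex.I * Bq g c q z
      = Aq g c q z + Complex.I * Dfun g c q z := by
    intro z
    rw [Bq, deriv_Aq]
    ring
  have hEsharp : ∀ z : ℂ,
      (starRingEnd ℂ) (Aq g c q ((starRingEnd ℂ) z) - Complex.I * Bq g c q ((starRingEnd ℂ) z))
      = Aq g c q z - Complex.I * Dfun g c q z := by
    intro z
    rw [hEdef, map_add, map_mul, Complex.conj_I, Aq_conj, Dfun_conj]
    ring
  constructor
  · rintro ⟨hdiff, hineq, hreal⟩ ρ hρ
    have upper : ∀ σ : ℂ, 0 < σ.im → Aq g c q σ ≠ 0 := by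
      intro σ hσ hAσ
      have h := hineq σ hσ
      simp only at h
      rw [hEsharp σ, hEdef σ, hAσ, zero_sub, zero_add, norm_neg] at h
      exact lt_irrefl _ h
    have him : ρ.im = 0 := by
      rcases lt_trichotomy ρ.im 0 with h|h|h
      · exfalso
        apply upper ((starRingEnd ℂ) ρ) (by simp [Complex.conj_im]; linarith) ?_
        have h2 := congrArg (starRingEnd ℂ) (Aq_conj g c q ρ)
        rw [Complex.conj_conj] at h2
        rw [h2, hρ, map_zero]
      · exact h
      · exact absurd hρ (upper ρ h)
    refine ⟨him, ?_⟩
    intro hder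
    have hρr : ((ρ.re : ℝ) : ℂ) = ρ := by
      apply Complex.ext <;> simp [him]
    apply hreal ρ.re
    show Aq g c q ((ρ.re:ℝ):ℂ) - Complex.I * Bq g c q ((ρ.re:ℝ):ℂ) = 0
    rw [hρr, hEdef, hρ, ← deriv_Aq, hder]
    ring
  · intro hyp
    refine ⟨?_, ?_, ?_⟩
    · have hfn : (fun z => Aq g c q z - Complex.I * Bq g c q z)
          = fun z => Aq g c q z + Complex.I * Dfun g c q z := funext hEdef
      rw [hfn]
      exact Differentiable.add (fun z => (Aq_hasDerivAt_sum g c q z).differentiableAt)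
        ((Dfun_differentiable g c q).const_mul Complex.I)
    · intro z hz
      simp only
      rw [hEsharp z, hEdef z]
      set w := Complex.exp (Complex.I * z * (Real.log q:ℂ)) with hwdef
      set f := Complex.exp (-(Complex.I * (g:ℂ) * z * (Real.log q:ℂ))) with hfdef
      have hAz : Aq g c q z = f * (Qpoly g c).eval w := by rw [Aq, Pfun_eval]
      have hDz : Dfun g c q z = Complex.I * (Real.log q:ℂ) * f *
          (w * (Qpoly g c).derivative.eval w - (g:ℂ) * (Qpoly g c).eval w) := by
        have h1 := (Aq_hasDerivAt g c q z).deriv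
        rw [deriv_Aq] at h1
        exact h1
      have hw1 : ‖w‖ < 1 := by
        rw [hwdef, Complex.norm_exp]
        have hre : (Complex.I * z * ((Real.log q:ℝ):ℂ)).re = -(z.im * Real.log q) := by
          simp [Complex.mul_re, Complex.mul_im]
        rw [hre, Real.exp_lt_one_iff]
        nlinarith
      have hQw : (Qpoly g c).eval w ≠ 0 := by
        intro h
        have hA0 : Aq g c q z = 0 := by rw [hAz, h, mul_zero]
        have := (hyp z hA0).1
        linarith [hz, this]
      have hfac := Qpoly_factor g hg c hc0
      have hcirc := Qpoly_roots_abs g hg q hq c hc0 (fun ρ h => (hyp ρ h).1)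
      have hcard : Multiset.card (Qpoly g c).roots = 2*g := Qpoly_roots_card g hg c hc0
      set Pr := ((Qpoly g c).roots.map (fun a => Polynomial.X - Polynomial.C a)).prod with hPrdef
      have hPrw : Pr.eval w ≠ 0 := eval_prod_ne_zero hw1 _ hcirc
      have hc0' : (c 0 : ℂ) ≠ 0 := by exact_mod_cast hc0
      have hratio : w * (Qpoly g c).derivative.eval w / (Qpoly g c).eval w
          = w * (Polynomial.derivative Pr).eval w / Pr.eval w := by
        conv_lhs => rw [hfac]
        rw [Polynomial.derivative_C_mul, Polynomial.eval_mul, Polynomial.eval_mul,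
          Polynomial.eval_C]
        field_simp
      set u : ℂ := w * (Qpoly g c).derivative.eval w / (Qpoly g c).eval w - (g:ℂ) with hu
      have hure : u.re < 0 := by
        have hlt := logderiv_lt hw1 (Qpoly g c).roots hcirc (by rw [hcard]; omega)
        rw [hcard] at hlt
        rw [hu, Complex.sub_re, hratio]
        have hgre : ((g:ℂ)).re = (g:ℝ) := by simp
        rw [hgre]
        push_cast at hlt
        linarith
      have hQu : (Qpoly g c).eval w * u
          = w * (Qpoly g c).derivative.eval w - (g:ℂ) * (Qpoly g c).eval w := by
        rw [hu]
        field_simp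
      have hplus : Aq g c q z + Complex.I * Dfun g c q z
          = f * (Qpoly g c).eval w * (1 - (Real.log q:ℂ) * u) := by
        rw [hAz, hDz]
        linear_combination (((Real.log q:ℝ):ℂ)*f*(w * (Qpoly g c).derivative.eval w
          - (g:ℂ)*(Qpoly g c).eval w)) * Complex.I_mul_I + (((Real.log q:ℝ):ℂ)*f) * hQu
      have hminus : Aq g c q z - Complex.I * Dfun g c q z
          = f * (Qpoly g c).eval w * (1 + (Real.log q:ℂ) * u) := by
        rw [hAz, hDz]
        linear_combination (-((Real.log q:ℝ):ℂ)*f*(w * (Qpoly g c).derivative.eval w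
          - (g:ℂ)*(Qpoly g c).eval w)) * Complex.I_mul_I + (-((Real.log q:ℝ):ℂ)*f) * hQu
      rw [hplus, hminus, norm_mul, norm_mul, norm_mul, norm_mul]
      apply mul_lt_mul_of_pos_left ?_ (mul_pos (norm_pos_iff.mpr
        (Complex.exp_ne_zero _)) (norm_pos_iff.mpr hQw))
      apply abs_one_add_lt
      have : (((Real.log q:ℝ):ℂ)*u).re = Real.log q * u.re := by
        simp [Complex.mul_re]
      rw [this]
      nlinarith
    · intro x hx
      simp only [hEdef] at hx
      have hAim : (Aq g c q (x:ℂ)).im = 0 := by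
        have h2 := Aq_conj g c q (x:ℂ)
        rw [Complex.conj_ofReal] at h2
        exact Complex.conj_eq_iff_im.mp h2
      have hDim : (Dfun g c q (x:ℂ)).im = 0 := by
        have h2 := Dfun_conj g c q (x:ℂ)
        rw [Complex.conj_ofReal] at h2
        exact Complex.conj_eq_iff_im.mp h2
      have hre := congrArg Complex.re hx
      have him := congrArg Complex.im hx
      simp only [Complex.add_re, Complex.add_im, Complex.mul_re, Complex.mul_im,
        Complex.I_re, Complex.I_im, Complex.zero_re, Complex.zero_im, hAim, hDim] at hre him
      have hA0 : Aq g c q (x:ℂ) = 0 := by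
        apply Complex.ext _ hAim
        simpa using hre
      have hD0 : Dfun g c q (x:ℂ) = 0 := by
        apply Complex.ext _ hDim
        simpa using him
      have hne := (hyp _ hA0).2
      rw [deriv_Aq] at hne
      exact hne hD0
end

section
/- Let z, w ∈ ℂ with z ≠ conj(w), and suppose (A(·,z), B(·,z)) and (A(·,w), B(·,w)) are solutions of the first-order system on [a₁, a₀]. Define K(a) = ( conj(A(a,w))·B(a,z) − conj(B(a,w))·A(a,z) ) / ( π·(z − conj(w)) ). Then K(a₁) − K(a₀) = (1/π)·∫_{a₁}^{a₀} conj(A(a,w))·A(a,z)·γ(a)^{−1}·a^{−1} da + (1/π)·∫_{a₁}^{a₀} conj(B(a,w))·B(a,z)·γ(a)·a^{−1} da. -/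
open Complex MeasureTheory

/-- A pair `(A, B)` of functions on `[a₁, a₀]` is a solution of the first-order system with
parameter `ζ` if both are continuous on `[a₁, a₀]` and, outside a finite subset `S` of
`(a₁, a₀)`, both are differentiable with `a·A'(a) = ζ·γ(a)·B(a)` and
`a·B'(a) = -ζ·γ(a)⁻¹·A(a)`. -/
def IsSolution (a₁ a₀ : ℝ) (γ : ℝ → ℝ) (ζ : ℂ) (A B : ℝ → ℂ) : Prop :=
  ContinuousOn A (Set.Icc a₁ a₀) ∧ ContinuousOn B (Set.Icc a₁ a₀) ∧
  ∃ S : Set ℝ, S.Finite ∧ S ⊆ Set.Ioo a₁ a₀ ∧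
    ∀ a ∈ Set.Ioo a₁ a₀ \ S,
      HasDerivAt A (ζ * (γ a : ℂ) * B a / (a : ℂ)) a ∧
      HasDerivAt B (-(ζ * ((γ a : ℂ))⁻¹ * A a / (a : ℂ))) a

lemma hasDerivAt_conj' {f : ℝ → ℂ} {d : ℂ} {x : ℝ} (h : HasDerivAt f d x) :
    HasDerivAt (fun t => (starRingEnd ℂ) (f t)) ((starRingEnd ℂ) d) x := by
  exact h.star

theorem stmt12 (a₁ a₀ : ℝ) (ha₁ : 0 < a₁) (ha : a₁ < a₀) (γ : ℝ → ℝ)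
    (hγne : ∀ a ∈ Set.Icc a₁ a₀, γ a ≠ 0)
    (hγint : IntervalIntegrable γ volume a₁ a₀)
    (hγinvint : IntervalIntegrable (fun a => (γ a)⁻¹) volume a₁ a₀)
    (z w : ℂ) (hzw : z ≠ (starRingEnd ℂ) w)
    (Az Bz Aw Bw : ℝ → ℂ)
    (hz : IsSolution a₁ a₀ γ z Az Bz) (hw : IsSolution a₁ a₀ γ w Aw Bw) :
    ((starRingEnd ℂ) (Aw a₁) * Bz a₁ - (starRingEnd ℂ) (Bw a₁) * Az a₁) /
        ((Real.pi : ℂ) * (z - (starRingEnd ℂ) w)) -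
      ((starRingEnd ℂ) (Aw a₀) * Bz a₀ - (starRingEnd ℂ) (Bw a₀) * Az a₀) /
        ((Real.pi : ℂ) * (z - (starRingEnd ℂ) w)) =
    (1 / (Real.pi : ℂ)) *
        (∫ a in a₁..a₀, (starRingEnd ℂ) (Aw a) * Az a * ((γ a : ℂ))⁻¹ * ((a : ℂ))⁻¹) +
      (1 / (Real.pi : ℂ)) *
        (∫ a in a₁..a₀, (starRingEnd ℂ) (Bw a) * Bz a * (γ a : ℂ) * ((a : ℂ))⁻¹) := by
  obtain ⟨hAzc, hBzc, Sz, hSzf, hSzsub, hSz⟩ := hz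
  obtain ⟨hAwc, hBwc, Sw, hSwf, hSwsub, hSw⟩ := hw
  have hπ : (Real.pi : ℂ) ≠ 0 := by exact_mod_cast Real.pi_ne_zero
  have hzw' : z - (starRingEnd ℂ) w ≠ 0 := sub_ne_zero.mpr hzw
  have hIcc : Set.uIcc a₁ a₀ = Set.Icc a₁ a₀ := Set.uIcc_of_le ha.le
  set F : ℝ → ℂ := fun a => (starRingEnd ℂ) (Aw a) * Bz a - (starRingEnd ℂ) (Bw a) * Az a
    with hFdef
  set f₁ : ℝ → ℂ := fun a => (starRingEnd ℂ) (Aw a) * Az a * ((γ a : ℂ))⁻¹ * ((a : ℂ))⁻¹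
    with hf₁def
  set f₂ : ℝ → ℂ := fun a => (starRingEnd ℂ) (Bw a) * Bz a * (γ a : ℂ) * ((a : ℂ))⁻¹
    with hf₂def
  -- continuity facts
  have haC : ContinuousOn (fun a : ℝ => ((a : ℂ))⁻¹) (Set.Icc a₁ a₀) := by
    apply ContinuousOn.inv₀ Complex.continuous_ofReal.continuousOn
    intro x hx
    exact_mod_cast (ha₁.trans_le hx.1).ne'
  have hAwconj : ContinuousOn (fun a => (starRingEnd ℂ) (Aw a)) (Set.Icc a₁ a₀) :=
    Complex.continuous_conj.comp_continuousOn hAwc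
  have hBwconj : ContinuousOn (fun a => (starRingEnd ℂ) (Bw a)) (Set.Icc a₁ a₀) :=
    Complex.continuous_conj.comp_continuousOn hBwc
  -- integrability of the two integrands
  have hγinvC : IntervalIntegrable (fun a => ((γ a : ℂ))⁻¹) volume a₁ a₀ := by
    have h : IntervalIntegrable (fun a => (((γ a)⁻¹ : ℝ) : ℂ)) volume a₁ a₀ :=
      ⟨hγinvint.1.ofReal, hγinvint.2.ofReal⟩
    simpa [Complex.ofReal_inv] using h
  have hγC : IntervalIntegrable (fun a => ((γ a : ℝ) : ℂ)) volume a₁ a₀ :=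
    ⟨hγint.1.ofReal, hγint.2.ofReal⟩
  have hf₁int : IntervalIntegrable f₁ volume a₁ a₀ := by
    have h := hγinvC.mul_continuousOn (g := fun a => (starRingEnd ℂ) (Aw a) * Az a * ((a : ℂ))⁻¹)
      (by rw [hIcc]; exact (hAwconj.mul hAzc).mul haC)
    apply h.congr
    intro x _
    simp only [hf₁def]; ring
  have hf₂int : IntervalIntegrable f₂ volume a₁ a₀ := by
    have h := hγC.mul_continuousOn (g := fun a => (starRingEnd ℂ) (Bw a) * Bz a * ((a : ℂ))⁻¹)
      (by rw [hIcc]; exact (hBwconj.mul hBzc).mul haC)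
    apply h.congr
    intro x _
    simp only [hf₂def]; ring
  have hF'int : IntervalIntegrable
      (fun a => ((starRingEnd ℂ) w - z) * (f₁ a + f₂ a)) volume a₁ a₀ :=
    ((hf₁int.add hf₂int).const_mul _)
  -- derivative of F off the exceptional set
  have hFc : ContinuousOn F (Set.Icc a₁ a₀) :=
    (hAwconj.mul hBzc).sub (hBwconj.mul hAzc)
  have hFd : ∀ x ∈ Set.Ioo a₁ a₀ \ (Sz ∪ Sw),
      HasDerivAt F (((starRingEnd ℂ) w - z) * (f₁ x + f₂ x)) x := by
    rintro x ⟨hx, hxS⟩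
    obtain ⟨hdAz, hdBz⟩ := hSz x ⟨hx, fun h => hxS (Or.inl h)⟩
    obtain ⟨hdAw, hdBw⟩ := hSw x ⟨hx, fun h => hxS (Or.inr h)⟩
    have hx0 : (x : ℂ) ≠ 0 := by exact_mod_cast (ha₁.trans hx.1).ne'
    have hγx : (γ x : ℂ) ≠ 0 := by
      exact_mod_cast hγne x ⟨hx.1.le, hx.2.le⟩
    have h1 := (hasDerivAt_conj' hdAw).mul hdBz
    have h2 := (hasDerivAt_conj' hdBw).mul hdAz
    have h := h1.sub h2
    convert h using 1
    · rfl
    · rfl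
    simp only [hf₁def, hf₂def, map_mul, map_div₀, map_neg, Complex.conj_ofReal, map_inv₀]
    field_simp
    ring
  -- FTC
  have key : ∫ a in a₁..a₀, ((starRingEnd ℂ) w - z) * (f₁ a + f₂ a) = F a₀ - F a₁ :=
    integral_eq_of_hasDerivAt_off_countable_of_le F _ ha.le
      ((hSzf.union hSwf).countable) hFc hFd hF'int
  have hsplit : ∫ a in a₁..a₀, ((starRingEnd ℂ) w - z) * (f₁ a + f₂ a)
      = ((starRingEnd ℂ) w - z) * ((∫ a in a₁..a₀, f₁ a) + ∫ a in a₁..a₀, f₂ a) := by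
    rw [intervalIntegral.integral_const_mul, intervalIntegral.integral_add hf₁int hf₂int]
  rw [hsplit] at key
  have : F a₁ - F a₀ = (z - (starRingEnd ℂ) w) * ((∫ a in a₁..a₀, f₁ a) + ∫ a in a₁..a₀, f₂ a) := by
    rw [← neg_sub (F a₀), ← key]; ring
  rw [div_sub_div_same, this]
  field_simp
end

section
/- For every 1 ≤ n ≤ 2g and each sign ε ∈ {+1, −1}: adj(e₀⁺ + ε·e₀⁻·Jₙ^{(4g)})·v = adj(e₀⁺ + ε·e₁⁻·Jₙ^{(4g)})·v, where adj denotes the adjugate matrix and v ∈ ℝ^{4g} is the first column of e₀⁻ (i.e., v has i-th entry C(g+1−i)). -/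
open Matrix

/-- The `4g × 4g` matrix `e₀⁺` with (1-based) `(i,j)` entry `C (i - j - g)`. -/
noncomputable def e0p (g : ℕ) (C : ℤ → ℝ) : Matrix (Fin (4*g)) (Fin (4*g)) ℝ :=
  fun i j => C (((i : ℕ) : ℤ) - ((j : ℕ) : ℤ) - (g : ℤ))

/-- The `4g × 4g` matrix `e₀⁻` with (1-based) `(i,j)` entry `C (g - i + j)`. -/
noncomputable def e0m (g : ℕ) (C : ℤ → ℝ) : Matrix (Fin (4*g)) (Fin (4*g)) ℝ :=
  fun i j => C ((g : ℤ) - ((i : ℕ) : ℤ) + ((j : ℕ) : ℤ))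

/-- The matrix `e₁⁻`, equal to `e₀⁻` except that its first column is zero. -/
noncomputable def e1m (g : ℕ) (C : ℤ → ℝ) : Matrix (Fin (4*g)) (Fin (4*g)) ℝ :=
  fun i j => if (j : ℕ) = 0 then 0 else C ((g : ℤ) - ((i : ℕ) : ℤ) + ((j : ℕ) : ℤ))

/-- The `4g × 4g` matrix `Jₙ^{(4g)}` with (1-based) `(i,j)` entry `1` if `i + j = n + 1`,
`0` otherwise. -/
def J4 (g : ℕ) (n : ℕ) : Matrix (Fin (4*g)) (Fin (4*g)) ℝ :=
  fun i j => if (i : ℕ) + (j : ℕ) + 1 = n then 1 else 0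

theorem stmt15 (g : ℕ) (hg : 1 ≤ g) (C : ℤ → ℝ)
    (hsupp : ∀ m : ℤ, g < m.natAbs → C m = 0) :
    ∀ n : ℕ, 1 ≤ n → n ≤ 2*g → ∀ ε : ℝ, ε = 1 ∨ ε = -1 →
      (Matrix.adjugate (e0p g C + ε • (e0m g C * J4 g n))).mulVec
          (fun i => C ((g : ℤ) - ((i : ℕ) : ℤ))) =
        (Matrix.adjugate (e0p g C + ε • (e1m g C * J4 g n))).mulVec
          (fun i => C ((g : ℤ) - ((i : ℕ) : ℤ))) := by
  intro n hn1 hn2 ε hε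
  set v : Fin (4*g) → ℝ := fun i => C ((g : ℤ) - ((i : ℕ) : ℤ)) with hv
  have h4g : 0 < 4*g := by omega
  have hj0 : n - 1 < 4*g := by omega
  set j0 : Fin (4*g) := ⟨n-1, hj0⟩ with hj0def
  set A' : Matrix (Fin (4*g)) (Fin (4*g)) ℝ := e0p g C + ε • (e1m g C * J4 g n) with hA'
  set A : Matrix (Fin (4*g)) (Fin (4*g)) ℝ := e0p g C + ε • (e0m g C * J4 g n) with hA
  -- The two matrices differ only in column j0
  have hdiff : ∀ i j, A i j = if j = j0 then A' i j0 + ε * v i else A' i j := by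
    intro i j
    have key : (e0m g C * J4 g n) i j
        = (e1m g C * J4 g n) i j + (if j = j0 then v i else 0) := by
      rw [Matrix.mul_apply, Matrix.mul_apply]
      have hsum : ∑ k : Fin (4*g), (if k = (⟨0, h4g⟩ : Fin (4*g))
          then (if j = j0 then v i else 0) else 0) = (if j = j0 then v i else 0) := by
        simp
      rw [← hsum, ← Finset.sum_add_distrib]
      apply Finset.sum_congr rfl
      intro k _
      by_cases hk : k = (⟨0, h4g⟩ : Fin (4*g))
      · subst hk
        simp only [e0m, e1m, J4, if_pos rfl]
        by_cases hjj : j = j0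
        · subst hjj
          have : (0:ℕ) + (n-1) + 1 = n := by omega
          have h2 : n - 1 + 1 = n := by omega
          simp [this, h2, hv, hj0def]
        · have : ¬ ((0:ℕ) + (j:ℕ) + 1 = n) := by
            intro h
            apply hjj
            apply Fin.ext
            simp [hj0def]; omega
          have h2 : ¬ ((j:ℕ) + 1 = n) := by omega
          simp [this, h2, hjj]
      · have hk0 : ¬ ((k:ℕ) = 0) := by
          intro h; exact hk (Fin.ext (by simpa using h))
        simp [e0m, e1m, hk0, hk]
    simp only [hA, hA', Matrix.add_apply, Matrix.smul_apply, smul_eq_mul, key]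
    by_cases hjj : j = j0
    · subst hjj; simp; ring
    · simp [hjj]
  have hAup : A = A'.updateCol j0 (fun i => A' i j0 + ε * v i) := by
    ext i j
    rw [hdiff i j, Matrix.updateCol_apply]
  -- reduce to cramer
  rw [← Matrix.cramer_eq_adjugate_mulVec, ← Matrix.cramer_eq_adjugate_mulVec]
  funext j
  rw [Matrix.cramer_apply, Matrix.cramer_apply]
  by_cases hjj : j = j0
  · subst hjj
    congr 1
    rw [hAup]
    ext i k
    by_cases hk : k = j0 <;> simp [Matrix.updateCol_apply, hk]
  · have hcomm : A.updateCol j v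
        = (A'.updateCol j v).updateCol j0 (fun i => A' i j0 + ε * v i) := by
      ext i k
      by_cases hk : k = j0
      · subst hk
        simp [Matrix.updateCol_apply, hjj, Ne.symm hjj, hdiff]
      · by_cases hk2 : k = j
        · subst hk2; simp [Matrix.updateCol_apply, hk]
        · simp [Matrix.updateCol_apply, hk, hk2, hdiff]
    rw [hcomm]
    have hfun : (fun i => A' i j0 + ε * v i)
        = (fun i => (A'.updateCol j v) i j0) + ε • v := by
      funext i
      simp [Matrix.updateCol_apply, Ne.symm hjj]
    rw [hfun, Matrix.det_updateCol_add, Matrix.updateCol_eq_self,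
      Matrix.det_updateCol_smul]
    have hzero : ((A'.updateCol j v).updateCol j0 v).det = 0 := by
      apply Matrix.det_zero_of_column_eq hjj
      intro k
      simp [Matrix.updateCol_apply, hjj, Ne.symm hjj]
    rw [hzero, mul_zero, add_zero]
end

section
/- For each sign ε ∈ {+1, −1}: det(e₀⁺ + ε·e₁⁻·J₁^{(4g)}) = det(e₀⁺) and det(e₀⁺ + ε·e₁⁻·J₂^{(4g)}) = det(e₀⁺), where det(e₀⁺) = C(−g)^{4g}; and for every n with 3 ≤ n ≤ 2g, det(e₀⁺ + ε·e₁⁻·Jₙ^{(4g)}) = det(e₀⁺ + ε·e₀⁻·J_{n−2}^{(4g)}). -/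
open Matrix

/-- Determinant of a lower triangular matrix with constant diagonal. -/
private lemma det_tri {N : ℕ} (X : Matrix (Fin N) (Fin N) ℝ) (d : ℝ)
    (h0 : ∀ i j : Fin N, (i : ℕ) < (j : ℕ) → X i j = 0)
    (hd : ∀ i, X i i = d) :
    X.det = d ^ N := by
  rw [Matrix.det_of_lowerTriangular X (fun i j hij => h0 i j hij)]
  rw [Finset.prod_congr rfl fun i _ => hd i, Finset.prod_const, Finset.card_univ,
    Fintype.card_fin]

/-- Block-triangular determinant reduction: if all columns with index `≥ s` are
lower triangular with diagonal entries `d`, the determinant is the determinant of the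
top-left `s × s` block times `d ^ t`. -/
private lemma det_block {N s t : ℕ} (h : N = s + t) (hs : s ≤ N)
    (X : Matrix (Fin N) (Fin N) ℝ) (d : ℝ)
    (hcol : ∀ i j : Fin N, (i : ℕ) < (j : ℕ) → s ≤ (j : ℕ) → X i j = 0)
    (hdiag : ∀ i : Fin N, s ≤ (i : ℕ) → X i i = d) :
    X.det = (X.submatrix (Fin.castLE hs) (Fin.castLE hs)).det * d ^ t := by
  subst h
  rw [← Matrix.det_submatrix_equiv_self finSumFinEquiv X]
  rw [← Matrix.fromBlocks_toBlocks (X.submatrix ⇑finSumFinEquiv ⇑finSumFinEquiv)]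
  have h12 : (X.submatrix ⇑finSumFinEquiv ⇑finSumFinEquiv).toBlocks₁₂ = 0 := by
    ext i j
    simp only [Matrix.toBlocks₁₂, Matrix.of_apply, Matrix.submatrix_apply,
      finSumFinEquiv_apply_left, finSumFinEquiv_apply_right, Matrix.zero_apply]
    apply hcol
    · simp only [Fin.coe_castAdd, Fin.coe_natAdd]
      have := i.isLt; omega
    · simp only [Fin.coe_natAdd]; omega
  rw [h12, Matrix.det_fromBlocks_zero₁₂]
  have hA : (X.submatrix ⇑finSumFinEquiv ⇑finSumFinEquiv).toBlocks₁₁ =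
      X.submatrix (Fin.castLE hs) (Fin.castLE hs) := by
    ext i j
    simp only [Matrix.toBlocks₁₁, Matrix.of_apply, Matrix.submatrix_apply,
      finSumFinEquiv_apply_left]
    have e1 : ∀ i : Fin s, Fin.castAdd t i = Fin.castLE hs i := fun i => Fin.ext (by simp)
    rw [e1, e1]
  rw [hA]
  congr 1
  · have hD : ((X.submatrix ⇑finSumFinEquiv ⇑finSumFinEquiv).toBlocks₂₂).BlockTriangular
        OrderDual.toDual := by
      intro i j hij
      have hij' : i < j := hij
      simp only [Matrix.toBlocks₂₂, Matrix.of_apply, Matrix.submatrix_apply,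
        finSumFinEquiv_apply_right]
      apply hcol <;> simp only [Fin.coe_natAdd]
      · have : (i : ℕ) < (j : ℕ) := hij'
        omega
      · omega
    rw [Matrix.det_of_lowerTriangular _ hD]
    have hdd : ∀ i : Fin t,
        (X.submatrix ⇑finSumFinEquiv ⇑finSumFinEquiv).toBlocks₂₂ i i = d := by
      intro i
      simp only [Matrix.toBlocks₂₂, Matrix.of_apply, Matrix.submatrix_apply,
        finSumFinEquiv_apply_right]
      apply hdiag
      simp only [Fin.coe_natAdd]; omega
    rw [Finset.prod_congr rfl fun i _ => hdd i, Finset.prod_const, Finset.card_univ,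
      Fintype.card_fin]

private lemma mulJ_apply {g : ℕ} (hg : 1 ≤ g) (n : ℕ) (hn1 : 1 ≤ n) (hn : n ≤ 2*g)
    (A : Matrix (Fin (4*g)) (Fin (4*g)) ℝ) (i j : Fin (4*g)) :
    (A * J4 g n) i j =
      if (j : ℕ) + 1 ≤ n then A i ⟨n - 1 - (j : ℕ), by omega⟩ else 0 := by
  rw [Matrix.mul_apply]
  split
  · rename_i h
    rw [Finset.sum_eq_single (⟨n - 1 - (j : ℕ), by omega⟩ : Fin (4*g))]
    · have h1 : J4 g n ⟨n - 1 - (j : ℕ), by omega⟩ j = 1 := by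
        simp only [J4]
        rw [if_pos]
        omega
      rw [h1, mul_one]
    · intro k _ hk
      have hne : ¬((k : ℕ) + (j : ℕ) + 1 = n) := by
        intro hc
        refine hk (Fin.ext ?_)
        show (k : ℕ) = n - 1 - (j : ℕ)
        omega
      have h0 : J4 g n k j = 0 := by
        simp only [J4]
        rw [if_neg hne]
      rw [h0, mul_zero]
    · intro hc
      exact absurd (Finset.mem_univ _) hc
  · rename_i h
    apply Finset.sum_eq_zero
    intro k _
    have h0 : J4 g n k j = 0 := by
      simp only [J4]
      rw [if_neg (by omega)]
    rw [h0, mul_zero]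

private lemma e1m_mk (g : ℕ) (C : ℤ → ℝ) (i : Fin (4*g)) (x : ℕ) (hx : x < 4*g)
    (hx0 : x ≠ 0) :
    e1m g C i ⟨x, hx⟩ = C ((g : ℤ) - ((i : ℕ) : ℤ) + (x : ℤ)) := by
  simp [e1m, hx0]

private lemma e1m_mk0 (g : ℕ) (C : ℤ → ℝ) (i : Fin (4*g)) (x : ℕ) (hx : x < 4*g)
    (hx0 : x = 0) :
    e1m g C i ⟨x, hx⟩ = 0 := by
  simp [e1m, hx0]

private lemma e0m_mk (g : ℕ) (C : ℤ → ℝ) (i : Fin (4*g)) (x : ℕ) (hx : x < 4*g) :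
    e0m g C i ⟨x, hx⟩ = C ((g : ℤ) - ((i : ℕ) : ℤ) + (x : ℤ)) := by
  simp [e0m]

private lemma main3 (g : ℕ) (hg : 1 ≤ g) (C : ℤ → ℝ)
    (hsupp : ∀ m : ℤ, g < m.natAbs → C m = 0) (ε : ℝ)
    (k : ℕ) (hk : k + 3 ≤ 2*g) :
    (e0p g C + ε • (e1m g C * J4 g (k+3))).det =
      (e0p g C + ε • (e0m g C * J4 g (k+1))).det := by
  set L := e0p g C + ε • (e1m g C * J4 g (k+3)) with hLdef
  set R := e0p g C + ε • (e0m g C * J4 g (k+1)) with hRdef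
  have hL : ∀ i j : Fin (4*g), L i j =
      C (((i : ℕ) : ℤ) - ((j : ℕ) : ℤ) - (g : ℤ))
      + ε * (if (j : ℕ) ≤ k + 1 then
          C ((g : ℤ) + ((k : ℕ) : ℤ) + 2 - ((i : ℕ) : ℤ) - ((j : ℕ) : ℤ)) else 0) := by
    intro i j
    simp only [hLdef, Matrix.add_apply, Matrix.smul_apply, smul_eq_mul]
    rw [mulJ_apply hg (k+3) (by omega) (by omega)]
    congr 1
    by_cases hj : (j : ℕ) ≤ k + 1
    · rw [if_pos (by omega : (j : ℕ) + 1 ≤ k + 3), if_pos hj,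
        e1m_mk g C i _ _ (by omega)]
      congr 2
      omega
    · by_cases hj2 : (j : ℕ) = k + 2
      · rw [if_pos (by omega : (j : ℕ) + 1 ≤ k + 3), if_neg hj,
          e1m_mk0 g C i _ _ (by omega)]
      · rw [if_neg (by omega), if_neg hj]
  have hR : ∀ i j : Fin (4*g), R i j =
      C (((i : ℕ) : ℤ) - ((j : ℕ) : ℤ) - (g : ℤ))
      + ε * (if (j : ℕ) ≤ k then
          C ((g : ℤ) + ((k : ℕ) : ℤ) - ((i : ℕ) : ℤ) - ((j : ℕ) : ℤ)) else 0) := by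
    intro i j
    simp only [hRdef, Matrix.add_apply, Matrix.smul_apply, smul_eq_mul]
    rw [mulJ_apply hg (k+1) (by omega) (by omega)]
    congr 1
    by_cases hj : (j : ℕ) ≤ k
    · rw [if_pos (by omega : (j : ℕ) + 1 ≤ k + 1), if_pos hj, e0m_mk]
      congr 2
      omega
    · rw [if_neg (by omega), if_neg hj]
  have hs1 : (k + 2 : ℕ) ≤ 4*g := by omega
  have hs2 : (k + 1 : ℕ) ≤ 4*g := by omega
  have eL := det_block (show 4*g = (k+2) + (4*g - (k+2)) by omega) hs1 L (C (-(g:ℤ)))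
    (by
      intro i j hij hj
      rw [hL, if_neg (by omega), mul_zero, add_zero]
      exact hsupp _ (by omega))
    (by
      intro i hi
      rw [hL, if_neg (by omega), mul_zero, add_zero]
      congr 1
      omega)
  have eR := det_block (show 4*g = (k+1) + (4*g - (k+1)) by omega) hs2 R (C (-(g:ℤ)))
    (by
      intro i j hij hj
      rw [hR, if_neg (by omega), mul_zero, add_zero]
      exact hsupp _ (by omega))
    (by
      intro i hi
      rw [hR, if_neg (by omega), mul_zero, add_zero]
      congr 1
      omega)
  have h0j : ∀ j : Fin (k+2), j ≠ 0 →
      (L.submatrix (Fin.castLE hs1) (Fin.castLE hs1)) 0 j = 0 := by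
    intro j hj
    have hj' : (j : ℕ) ≠ 0 := by
      intro hc
      exact hj (Fin.ext (by simpa using hc))
    have hjlt := j.isLt
    simp only [Matrix.submatrix_apply, Fin.coe_castLE, Fin.val_zero]
    rw [hL]
    simp only [Fin.coe_castLE, Fin.val_zero, Nat.cast_zero]
    rw [if_pos (by omega), hsupp _ (by omega), hsupp _ (by omega), mul_zero, add_zero]
  have h00 : (L.submatrix (Fin.castLE hs1) (Fin.castLE hs1)) 0 0 = C (-(g:ℤ)) := by
    simp only [Matrix.submatrix_apply]
    rw [hL]
    simp only [Fin.coe_castLE, Fin.val_zero, Nat.cast_zero]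
    rw [if_pos (by omega), hsupp ((g : ℤ) + ((k : ℕ) : ℤ) + 2 - 0 - 0) (by omega),
      mul_zero, add_zero]
    congr 1
    omega
  have hTLdet : (L.submatrix (Fin.castLE hs1) (Fin.castLE hs1)).det =
      C (-(g:ℤ)) * (R.submatrix (Fin.castLE hs2) (Fin.castLE hs2)).det := by
    have hexp := Matrix.det_succ_row_zero (n := k+1)
      (L.submatrix (Fin.castLE hs1) (Fin.castLE hs1))
    rw [hexp, Finset.sum_eq_single_of_mem (0 : Fin (k+2)) (Finset.mem_univ _)
      (fun b _ hb => by rw [h0j b hb]; ring)]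
    rw [h00]
    simp only [Fin.val_zero, pow_zero, one_mul, Fin.succAbove_zero]
    have hsub : (L.submatrix (Fin.castLE hs1) (Fin.castLE hs1)).submatrix Fin.succ Fin.succ
        = R.submatrix (Fin.castLE hs2) (Fin.castLE hs2) := by
      ext i j
      have hilt := i.isLt
      have hjlt := j.isLt
      simp only [Matrix.submatrix_apply, Fin.coe_castLE, Fin.val_succ]
      rw [hL, hR]
      simp only [Fin.coe_castLE, Fin.val_succ]
      rw [if_pos (by omega), if_pos (by omega)]
      congr 1
      · congr 1
        push_cast
        ring
      · congr 2
        push_cast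
        ring
    rw [hsub]
  rw [eL, eR, hTLdet,
    show 4*g - (k+1) = (4*g - (k+2)) + 1 by omega, pow_succ]
  ring

theorem stmt16 (g : ℕ) (hg : 1 ≤ g) (C : ℤ → ℝ)
    (hsupp : ∀ m : ℤ, g < m.natAbs → C m = 0) :
    ∀ ε : ℝ, ε = 1 ∨ ε = -1 →
      (e0p g C + ε • (e1m g C * J4 g 1)).det = (e0p g C).det ∧
      (e0p g C + ε • (e1m g C * J4 g 2)).det = (e0p g C).det ∧
      (e0p g C).det = C (-(g : ℤ)) ^ (4*g) ∧
      (∀ n : ℕ, 3 ≤ n → n ≤ 2*g →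
        (e0p g C + ε • (e1m g C * J4 g n)).det =
          (e0p g C + ε • (e0m g C * J4 g (n-2))).det) := by
  intro ε hε
  have hdet0 : (e0p g C).det = C (-(g : ℤ)) ^ (4*g) := by
    apply det_tri
    · intro i j hij
      exact hsupp _ (by omega)
    · intro i
      simp only [e0p]
      congr 1
      omega
  have hcase1 : (e0p g C + ε • (e1m g C * J4 g 1)).det = (e0p g C).det := by
    have hz : e1m g C * J4 g 1 = 0 := by
      ext i j
      rw [mulJ_apply hg 1 le_rfl (by omega)]
      simp only [Matrix.zero_apply]
      split
      · exact e1m_mk0 g C i _ _ (by omega)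
      · rfl
    rw [hz, smul_zero, add_zero]
  have hcase2 : (e0p g C + ε • (e1m g C * J4 g 2)).det = (e0p g C).det := by
    have h2 : ∀ i j : Fin (4*g), (e0p g C + ε • (e1m g C * J4 g 2)) i j =
        C (((i : ℕ) : ℤ) - ((j : ℕ) : ℤ) - (g : ℤ))
        + ε * (if (j : ℕ) = 0 then C ((g : ℤ) - ((i : ℕ) : ℤ) + 1) else 0) := by
      intro i j
      simp only [Matrix.add_apply, Matrix.smul_apply, smul_eq_mul]
      rw [mulJ_apply hg 2 (by omega) (by omega)]
      congr 1
      by_cases hj : (j : ℕ) = 0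
      · rw [if_pos (by omega), if_pos hj, e1m_mk g C i _ _ (by omega)]
        congr 2
        omega
      · by_cases hj1 : (j : ℕ) = 1
        · rw [if_pos (by omega), if_neg hj, e1m_mk0 g C i _ _ (by omega)]
        · rw [if_neg (by omega), if_neg hj]
    rw [hdet0]
    apply det_tri
    · intro i j hij
      rw [h2, if_neg (by omega), mul_zero, add_zero]
      exact hsupp _ (by omega)
    · intro i
      rw [h2]
      by_cases hi : (i : ℕ) = 0
      · rw [if_pos hi, hsupp ((g : ℤ) - ((i : ℕ) : ℤ) + 1) (by omega), mul_zero, add_zero]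
        congr 1
        omega
      · rw [if_neg hi, mul_zero, add_zero]
        congr 1
        omega
  refine ⟨hcase1, hcase2, hdet0, ?_⟩
  intro n hn3 hn2g
  obtain ⟨k, rfl⟩ : ∃ k, n = k + 3 := ⟨n - 3, by omega⟩
  have h2 : k + 3 - 2 = k + 1 := by omega
  rw [h2]
  exact main3 g hg C hsupp ε k (by omega)
end

section
/- For every 1 ≤ n ≤ 2g and each sign ε ∈ {+1, −1}: det(E₀⁺ + ε·Eₙ♯J) = C(−g)^{8g−2n}·det(Tₙ⁺)·det(Tₙ⁻), where Tₙ⁺ and Tₙ⁻ denote the top-left n×n submatrices of E₀⁺ + E₀⁻·Jₙ^{(8g)} and of E₀⁺ − E₀⁻·Jₙ^{(8g)}, respectively. In particular det(E₀⁺ + Eₙ♯J) = det(E₀⁺ − Eₙ♯J). -/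
open Matrix

/-- The `8g × 8g` block-diagonal matrix `E₀⁺ = diag(e₀⁺, e₀⁺)`, where `e₀⁺` is the
`4g × 4g` matrix with (1-based) `(i,j)` entry `C (i - j - g)`. -/
noncomputable def E0p (g : ℕ) (C : ℤ → ℝ) : Matrix (Fin (8*g)) (Fin (8*g)) ℝ :=
  fun i j => if ((i : ℕ) < 4*g ↔ (j : ℕ) < 4*g) then
    C (((i : ℕ) : ℤ) - ((j : ℕ) : ℤ) - (g : ℤ)) else 0

/-- The `8g × 8g` block-diagonal matrix `E₀⁻ = diag(e₀⁻, e₀⁻)`, where `e₀⁻` is the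
`4g × 4g` matrix with (1-based) `(i,j)` entry `C (g - i + j)`. -/
noncomputable def E0m (g : ℕ) (C : ℤ → ℝ) : Matrix (Fin (8*g)) (Fin (8*g)) ℝ :=
  fun i j => if ((i : ℕ) < 4*g ↔ (j : ℕ) < 4*g) then
    C ((g : ℤ) - ((i : ℕ) : ℤ) + ((j : ℕ) : ℤ)) else 0

/-- The `8g × 8g` matrix `Jₙ^{(8g)}` with (1-based) `(i,j)` entry `1` if `i + j = n + 1`,
`0` otherwise. -/
def J8 (g : ℕ) (n : ℕ) : Matrix (Fin (8*g)) (Fin (8*g)) ℝ :=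
  fun i j => if (i : ℕ) + (j : ℕ) + 1 = n then 1 else 0

/-- The `8g × 8g` matrix `Eₙ♯J`, whose (1-based) `(i,j)` entry equals
`C (3g+1-i-(j-4g))` if `i ≤ 4g < j` and `2g-n+1 ≤ j-4g ≤ 2g`, equals
`C (3g+1-(i-4g)-j)` if `j ≤ 4g < i` and `j ≤ n`, and equals `0` otherwise. -/
noncomputable def EnJ (g : ℕ) (C : ℤ → ℝ) (n : ℕ) : Matrix (Fin (8*g)) (Fin (8*g)) ℝ :=
  fun i j =>
    if (i : ℕ) < 4*g ∧ 4*g ≤ (j : ℕ) ∧ 6*g ≤ (j : ℕ) + n ∧ (j : ℕ) < 6*g then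
      C (7*(g : ℤ) - 1 - ((i : ℕ) : ℤ) - ((j : ℕ) : ℤ))
    else if (j : ℕ) < 4*g ∧ 4*g ≤ (i : ℕ) ∧ (j : ℕ) < n then
      C (7*(g : ℤ) - 1 - ((i : ℕ) : ℤ) - ((j : ℕ) : ℤ))
    else 0

/-! ### Auxiliary definitions and lemmas -/


noncomputable def Amat (g n : ℕ) (C : ℤ → ℝ) : Matrix (Fin n) (Fin n) ℝ :=
  fun i j => C (((i : ℕ) : ℤ) - ((j : ℕ) : ℤ) - (g : ℤ))

noncomputable def Bmat (g n : ℕ) (C : ℤ → ℝ) : Matrix (Fin n) (Fin n) ℝ :=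
  fun i j => C ((g : ℤ) + (n : ℤ) - 1 - ((i : ℕ) : ℤ) - ((j : ℕ) : ℤ))

lemma det_tri_s17 {m : Type*} [DecidableEq m] [Fintype m] (M : Matrix m m ℝ) (c : ℝ)
    (v : m → ℕ) (hv : Function.Injective v)
    (h0 : ∀ i j, v i < v j → M i j = 0) (hd : ∀ i, M i i = c) :
    M.det = c ^ (Fintype.card m) := by
  letI : LinearOrder m := LinearOrder.lift' v hv
  rw [Matrix.det_of_lowerTriangular M (fun i j hij => h0 i j hij)]
  simp [hd, Finset.prod_const, Finset.card_univ]

lemma det_fromBlocks_AB (k : ℕ) (A B : Matrix (Fin k) (Fin k) ℝ) :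
    (fromBlocks A B B A).det = (A + B).det * (A - B).det := by
  have key : (fromBlocks 1 1 0 1 : Matrix (Fin k ⊕ Fin k) (Fin k ⊕ Fin k) ℝ) *
      fromBlocks A B B A * fromBlocks 1 (-1) 0 1 = fromBlocks (A + B) 0 B (A - B) := by
    rw [Matrix.fromBlocks_multiply, Matrix.fromBlocks_multiply]
    simp only [Matrix.one_mul, Matrix.mul_one, Matrix.zero_mul, Matrix.mul_zero,
      Matrix.mul_neg, Matrix.neg_mul, add_zero, zero_add]
    rw [show -(A + B) + (B + A) = (0 : Matrix (Fin k) (Fin k) ℝ) from by abel,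
      show -B + A = A - B from by abel]
  have h1 : ((fromBlocks 1 1 0 1 : Matrix (Fin k ⊕ Fin k) (Fin k ⊕ Fin k) ℝ)).det = 1 := by
    rw [Matrix.det_fromBlocks_zero₂₁, Matrix.det_one, mul_one]
  have h2 : ((fromBlocks 1 (-1) 0 1 : Matrix (Fin k ⊕ Fin k) (Fin k ⊕ Fin k) ℝ)).det = 1 := by
    rw [Matrix.det_fromBlocks_zero₂₁, Matrix.det_one, mul_one]
  have hd := congrArg Matrix.det key
  rw [Matrix.det_mul, Matrix.det_mul, h1, h2, one_mul, mul_one,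
    Matrix.det_fromBlocks_zero₁₂] at hd
  exact hd

set_option maxHeartbeats 1000000 in
lemma mainDet (g n : ℕ) (hg : 1 ≤ g) (C : ℤ → ℝ)
    (hsupp : ∀ m : ℤ, g < m.natAbs → C m = 0)
    (hn1 : 1 ≤ n) (hn2 : n ≤ 2*g) (ε : ℝ) :
    (E0p g C + ε • EnJ g C n).det =
      C (-(g : ℤ)) ^ (8*g - 2*n) *
        ((Amat g n C + ε • Bmat g n C).det * (Amat g n C - ε • Bmat g n C).det) := by
  set M := E0p g C + ε • EnJ g C n with hM
  have hC : ∀ m : ℤ, (m < -(g:ℤ) ∨ (g:ℤ) < m) → C m = 0 := fun m hm => hsupp m (by omega)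
  have hadd : ∀ i j : Fin (8*g), M i j = E0p g C i j + ε * EnJ g C n i j := by
    intro i j
    simp [hM, Matrix.add_apply, Matrix.smul_apply, smul_eq_mul]
  -- zero above the diagonal, away from the special top-right region
  have hZup : ∀ i j : Fin (8*g), (i:ℕ) < (j:ℕ) →
      ¬(6*g ≤ (j:ℕ) + n ∧ 4*g ≤ (j:ℕ) ∧ (j:ℕ) < 6*g ∧ (i:ℕ) < 4*g) → M i j = 0 := by
    intro i j hij hns
    rw [hadd]
    have h1 : E0p g C i j = 0 := by
      simp only [E0p]
      split_ifs with h
      · exact hC _ (by omega)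
      · rfl
    have h2 : EnJ g C n i j = 0 := by
      simp only [EnJ]
      split_ifs with h h'
      · exact absurd ⟨h.2.2.1, h.2.1, h.2.2.2, h.1⟩ hns
      · exact absurd hij (by omega)
      · rfl
    rw [h1, h2, mul_zero, add_zero]
  -- zero on rows ≥ 4g, middle columns
  have hZ2b : ∀ i j : Fin (8*g), 4*g ≤ (i:ℕ) → n ≤ (j:ℕ) → (j:ℕ) < 4*g → M i j = 0 := by
    intro i j h1 h2 h3
    rw [hadd]
    have e1 : E0p g C i j = 0 := by
      simp only [E0p]
      rw [if_neg]
      intro hiff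
      have := hiff.mpr (by omega)
      omega
    have e2 : EnJ g C n i j = 0 := by
      simp only [EnJ]
      rw [if_neg (by omega), if_neg (by omega)]
    rw [e1, e2, mul_zero, add_zero]
  -- zero on rows in [4g, 6g-n), first n columns
  have hZ3a : ∀ i j : Fin (8*g), 4*g ≤ (i:ℕ) → (i:ℕ) + n < 6*g → (j:ℕ) < n → M i j = 0 := by
    intro i j h1 h2 h3
    rw [hadd]
    have e1 : E0p g C i j = 0 := by
      simp only [E0p]
      rw [if_neg]
      intro hiff
      have := hiff.mpr (by omega)
      omega
    have e2 : EnJ g C n i j = 0 := by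
      simp only [EnJ]
      rw [if_neg (by omega), if_pos (by omega)]
      exact hC _ (by omega)
    rw [e1, e2, mul_zero, add_zero]
  -- diagonal
  have hdiag : ∀ i : Fin (8*g), M i i = C (-(g:ℤ)) := by
    intro i
    rw [hadd]
    have e1 : E0p g C i i = C (-(g:ℤ)) := by
      have h' : E0p g C i i = C (((i:ℕ):ℤ) - ((i:ℕ):ℤ) - (g:ℤ)) := by simp [E0p]
      rw [h']
      congr 1
      ring
    have e2 : EnJ g C n i i = 0 := by
      simp only [EnJ]
      rw [if_neg (by omega), if_neg (by omega)]
    rw [e1, e2, mul_zero, add_zero]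
  -- Step 1 : split off the bottom 2g rows/columns
  have step1 := Matrix.twoBlockTriangular_det M (fun i => 6*g ≤ (i:ℕ)) (by
    intro i hi j hj
    exact hZup i j (by omega) (by rintro ⟨_, _, h', _⟩; omega))
  set c1 := Fintype.card {i : Fin (8*g) // 6*g ≤ (i:ℕ)} with hc1
  have hB1 : (Matrix.toSquareBlockProp M (fun i => 6*g ≤ (i:ℕ))).det = C (-(g:ℤ)) ^ c1 := by
    apply det_tri_s17 _ _ (fun i => ((i.1 : Fin (8*g)) : ℕ))
      (fun a b h => Subtype.ext (Fin.ext h))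
    · intro a b hab
      have hb := b.2
      show M a.1 b.1 = 0
      exact hZup a.1 b.1 hab (by rintro ⟨_, _, h', _⟩; omega)
    · intro a
      show M a.1 a.1 = _
      exact hdiag a.1
  -- Step 2 : split off rows/columns in [n, 4g)
  have step2 := Matrix.twoBlockTriangular_det
      (Matrix.toSquareBlockProp M (fun i => ¬ 6*g ≤ (i:ℕ)))
      (fun i => n ≤ ((i.1 : Fin (8*g)) : ℕ) ∧ ((i.1 : Fin (8*g)) : ℕ) < 4*g) (by
    intro i hi j hj
    have hi2 := i.2
    show M i.1 j.1 = 0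
    rcases (by omega : ((i.1 : Fin (8*g)) : ℕ) < n ∨ 4*g ≤ ((i.1 : Fin (8*g)) : ℕ)) with h | h
    · exact hZup i.1 j.1 (by omega) (by rintro ⟨_, h', _, _⟩; omega)
    · exact hZ2b i.1 j.1 h (by omega) (by omega))
  set c2 := Fintype.card {i : {i : Fin (8*g) // ¬ 6*g ≤ (i:ℕ)} //
      n ≤ ((i.1 : Fin (8*g)) : ℕ) ∧ ((i.1 : Fin (8*g)) : ℕ) < 4*g} with hc2
  have hB2 : (Matrix.toSquareBlockProp (Matrix.toSquareBlockProp M (fun i => ¬ 6*g ≤ (i:ℕ)))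
      (fun i => n ≤ ((i.1 : Fin (8*g)) : ℕ) ∧ ((i.1 : Fin (8*g)) : ℕ) < 4*g)).det
      = C (-(g:ℤ)) ^ c2 := by
    apply det_tri_s17 _ _ (fun i => ((i.1.1 : Fin (8*g)) : ℕ))
      (fun a b h => Subtype.ext (Subtype.ext (Fin.ext h)))
    · intro a b hab
      have hb := b.2
      show M a.1.1 b.1.1 = 0
      exact hZup a.1.1 b.1.1 hab (by rintro ⟨_, h', _, _⟩; omega)
    · intro a
      show M a.1.1 a.1.1 = _
      exact hdiag a.1.1
  -- Step 3 : split the rest into the 2n block and [4g, 6g-n)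
  have step3 := Matrix.twoBlockTriangular_det
      (Matrix.toSquareBlockProp (Matrix.toSquareBlockProp M (fun i => ¬ 6*g ≤ (i:ℕ)))
        (fun i => ¬(n ≤ ((i.1 : Fin (8*g)) : ℕ) ∧ ((i.1 : Fin (8*g)) : ℕ) < 4*g)))
      (fun i => ((i.1.1 : Fin (8*g)) : ℕ) < n ∨ 6*g ≤ ((i.1.1 : Fin (8*g)) : ℕ) + n) (by
    intro i hi j hj
    have hi1 := i.1.2
    have hi2 := i.2
    have hj1 := j.1.2
    have hj2 := j.2
    show M i.1.1 j.1.1 = 0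
    rcases hj with h | h
    · exact hZ3a i.1.1 j.1.1 (by omega) (by omega) (by omega)
    · exact hZup i.1.1 j.1.1 (by omega) (by rintro ⟨_, _, _, h'⟩; omega))
  set c4 := Fintype.card {i : {i : {i : Fin (8*g) // ¬ 6*g ≤ (i:ℕ)} //
      ¬(n ≤ ((i.1 : Fin (8*g)) : ℕ) ∧ ((i.1 : Fin (8*g)) : ℕ) < 4*g)} //
      ¬(((i.1.1 : Fin (8*g)) : ℕ) < n ∨ 6*g ≤ ((i.1.1 : Fin (8*g)) : ℕ) + n)} with hc4
  have hB4 : (Matrix.toSquareBlockProp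
      (Matrix.toSquareBlockProp (Matrix.toSquareBlockProp M (fun i => ¬ 6*g ≤ (i:ℕ)))
        (fun i => ¬(n ≤ ((i.1 : Fin (8*g)) : ℕ) ∧ ((i.1 : Fin (8*g)) : ℕ) < 4*g)))
      (fun i => ¬(((i.1.1 : Fin (8*g)) : ℕ) < n ∨ 6*g ≤ ((i.1.1 : Fin (8*g)) : ℕ) + n))).det
      = C (-(g:ℤ)) ^ c4 := by
    apply det_tri_s17 _ _ (fun i => ((i.1.1.1 : Fin (8*g)) : ℕ))
      (fun a b h => Subtype.ext (Subtype.ext (Subtype.ext (Fin.ext h))))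
    · intro a b hab
      have hb := b.2
      show M a.1.1.1 b.1.1.1 = 0
      exact hZup a.1.1.1 b.1.1.1 hab (by rintro ⟨h', _, _, _⟩; omega)
    · intro a
      show M a.1.1.1 a.1.1.1 = _
      exact hdiag a.1.1.1
  -- entry value lemmas for the 2n-block
  have hV11 : ∀ i j : Fin (8*g), (i:ℕ) < n → (j:ℕ) < n →
      M i j = C (((i:ℕ):ℤ) - ((j:ℕ):ℤ) - (g:ℤ)) := by
    intro i j h1 h2
    rw [hadd]
    have e1 : E0p g C i j = C (((i:ℕ):ℤ) - ((j:ℕ):ℤ) - (g:ℤ)) := by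
      simp only [E0p]
      rw [if_pos (by constructor <;> intro <;> omega)]
    have e2 : EnJ g C n i j = 0 := by
      simp only [EnJ]
      rw [if_neg (by omega), if_neg (by omega)]
    rw [e1, e2, mul_zero, add_zero]
  have hV12 : ∀ i j : Fin (8*g), (i:ℕ) < n → 6*g ≤ (j:ℕ) + n → (j:ℕ) < 6*g →
      M i j = ε * C (7*(g:ℤ) - 1 - ((i:ℕ):ℤ) - ((j:ℕ):ℤ)) := by
    intro i j h1 h2 h3
    rw [hadd]
    have e1 : E0p g C i j = 0 := by
      simp only [E0p]
      rw [if_neg]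
      intro hiff
      have := hiff.mp (by omega)
      omega
    have e2 : EnJ g C n i j = C (7*(g:ℤ) - 1 - ((i:ℕ):ℤ) - ((j:ℕ):ℤ)) := by
      simp only [EnJ]
      rw [if_pos (by omega)]
    rw [e1, e2, zero_add]
  have hV21 : ∀ i j : Fin (8*g), 6*g ≤ (i:ℕ) + n → (i:ℕ) < 6*g → (j:ℕ) < n →
      M i j = ε * C (7*(g:ℤ) - 1 - ((i:ℕ):ℤ) - ((j:ℕ):ℤ)) := by
    intro i j h1 h2 h3
    rw [hadd]
    have e1 : E0p g C i j = 0 := by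
      simp only [E0p]
      rw [if_neg]
      intro hiff
      have := hiff.mpr (by omega)
      omega
    have e2 : EnJ g C n i j = C (7*(g:ℤ) - 1 - ((i:ℕ):ℤ) - ((j:ℕ):ℤ)) := by
      simp only [EnJ]
      rw [if_neg (by omega), if_pos (by omega)]
    rw [e1, e2, zero_add]
  have hV22 : ∀ i j : Fin (8*g), 4*g ≤ (i:ℕ) → 4*g ≤ (j:ℕ) →
      M i j = C (((i:ℕ):ℤ) - ((j:ℕ):ℤ) - (g:ℤ)) := by
    intro i j h1 h2
    rw [hadd]
    have e1 : E0p g C i j = C (((i:ℕ):ℤ) - ((j:ℕ):ℤ) - (g:ℤ)) := by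
      simp only [E0p]
      rw [if_pos (by constructor <;> intro <;> omega)]
    have e2 : EnJ g C n i j = 0 := by
      simp only [EnJ]
      rw [if_neg (by omega), if_neg (by omega)]
    rw [e1, e2, mul_zero, add_zero]
  -- the equivalence onto the 2n block
  let f : Fin n ⊕ Fin n → {i : {i : {i : Fin (8*g) // ¬ 6*g ≤ (i:ℕ)} //
      ¬(n ≤ ((i.1 : Fin (8*g)) : ℕ) ∧ ((i.1 : Fin (8*g)) : ℕ) < 4*g)} //
      (((i.1.1 : Fin (8*g)) : ℕ) < n ∨ 6*g ≤ ((i.1.1 : Fin (8*g)) : ℕ) + n)} :=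
    Sum.elim
      (fun k => ⟨⟨⟨⟨(k:ℕ), by omega⟩, by show ¬ 6*g ≤ (k:ℕ); omega⟩,
        by show ¬(n ≤ (k:ℕ) ∧ (k:ℕ) < 4*g); omega⟩,
        by show ((k:ℕ) < n ∨ 6*g ≤ (k:ℕ) + n); omega⟩)
      (fun k => ⟨⟨⟨⟨6*g - n + (k:ℕ), by omega⟩, by show ¬ 6*g ≤ 6*g - n + (k:ℕ); omega⟩,
        by show ¬(n ≤ 6*g - n + (k:ℕ) ∧ 6*g - n + (k:ℕ) < 4*g); omega⟩,
        by show (6*g - n + (k:ℕ) < n ∨ 6*g ≤ 6*g - n + (k:ℕ) + n); omega⟩)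
  have hfval : ∀ x, ((f x).1.1.1 : ℕ) =
      Sum.elim (fun k : Fin n => (k:ℕ)) (fun k : Fin n => 6*g - n + (k:ℕ)) x := by
    rintro (a | a) <;> rfl
  have hfbij : Function.Bijective f := by
    constructor
    · rintro (a | a) (b | b) h <;>
        (have h1 := congrArg (fun x => ((x.1.1.1 : Fin (8*g)) : ℕ)) h
         rw [hfval, hfval] at h1
         simp only [Sum.elim_inl, Sum.elim_inr] at h1)
      · exact congrArg Sum.inl (Fin.ext h1)
      · exact absurd h1 (by have := a.isLt; have := b.isLt; omega)
      · exact absurd h1 (by have := a.isLt; have := b.isLt; omega)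
      · exact congrArg Sum.inr (Fin.ext (by have := a.isLt; have := b.isLt; omega))
    · rintro ⟨⟨⟨⟨x, hx0⟩, hx1⟩, hx2⟩, hx3⟩
      have hx1' : ¬ 6*g ≤ x := hx1
      have hx2' : ¬(n ≤ x ∧ x < 4*g) := hx2
      have hx3' : x < n ∨ 6*g ≤ x + n := hx3
      rcases (by omega : x < n ∨ (6*g - n ≤ x ∧ x < 6*g)) with h | h
      · exact ⟨Sum.inl ⟨x, h⟩,
          Subtype.ext (Subtype.ext (Subtype.ext rfl))⟩
      · refine ⟨Sum.inr ⟨x - (6*g - n), by omega⟩, ?_⟩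
        apply Subtype.ext; apply Subtype.ext; apply Subtype.ext; apply Fin.ext
        show 6*g - n + (x - (6*g - n)) = x
        omega
  let e3 : (Fin n ⊕ Fin n) ≃ {i : {i : {i : Fin (8*g) // ¬ 6*g ≤ (i:ℕ)} //
      ¬(n ≤ ((i.1 : Fin (8*g)) : ℕ) ∧ ((i.1 : Fin (8*g)) : ℕ) < 4*g)} //
      (((i.1.1 : Fin (8*g)) : ℕ) < n ∨ 6*g ≤ ((i.1.1 : Fin (8*g)) : ℕ) + n)} :=
    Equiv.ofBijective f hfbij
  have hB3 : (Matrix.toSquareBlockProp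
      (Matrix.toSquareBlockProp (Matrix.toSquareBlockProp M (fun i => ¬ 6*g ≤ (i:ℕ)))
        (fun i => ¬(n ≤ ((i.1 : Fin (8*g)) : ℕ) ∧ ((i.1 : Fin (8*g)) : ℕ) < 4*g)))
      (fun i => (((i.1.1 : Fin (8*g)) : ℕ) < n ∨ 6*g ≤ ((i.1.1 : Fin (8*g)) : ℕ) + n))).det
      = (Amat g n C + ε • Bmat g n C).det * (Amat g n C - ε • Bmat g n C).det := by
    rw [← Matrix.det_submatrix_equiv_self e3]
    have hblock : (Matrix.toSquareBlockProp
        (Matrix.toSquareBlockProp (Matrix.toSquareBlockProp M (fun i => ¬ 6*g ≤ (i:ℕ)))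
          (fun i => ¬(n ≤ ((i.1 : Fin (8*g)) : ℕ) ∧ ((i.1 : Fin (8*g)) : ℕ) < 4*g)))
        (fun i => (((i.1.1 : Fin (8*g)) : ℕ) < n ∨ 6*g ≤ ((i.1.1 : Fin (8*g)) : ℕ) + n))).submatrix
          e3 e3
        = fromBlocks (Amat g n C) (ε • Bmat g n C) (ε • Bmat g n C) (Amat g n C) := by
      ext x y
      have hx := hfval x
      have hy := hfval y
      rcases x with a | a <;> rcases y with b | b <;>
        simp only [Sum.elim_inl, Sum.elim_inr] at hx hy
      · show M ((f (Sum.inl a)).1.1.1) ((f (Sum.inl b)).1.1.1) = Amat g n C a b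
        rw [hV11 _ _ (by rw [hx]; exact a.isLt) (by rw [hy]; exact b.isLt), hx, hy]
        rfl
      · show M ((f (Sum.inl a)).1.1.1) ((f (Sum.inr b)).1.1.1)
          = (ε • Bmat g n C) a b
        rw [hV12 _ _ (by rw [hx]; exact a.isLt) (by rw [hy]; have := b.isLt; omega)
          (by rw [hy]; have := b.isLt; omega), hx, hy]
        have := b.isLt
        have harg : 7*(g:ℤ) - 1 - (((a:ℕ):ℕ):ℤ) - ((6*g - n + (b:ℕ) : ℕ):ℤ)
            = (g:ℤ) + (n:ℤ) - 1 - ((a:ℕ):ℤ) - ((b:ℕ):ℤ) := by omega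
        rw [harg]
        simp only [Matrix.smul_apply, Bmat, smul_eq_mul]
      · show M ((f (Sum.inr a)).1.1.1) ((f (Sum.inl b)).1.1.1)
          = (ε • Bmat g n C) a b
        rw [hV21 _ _ (by rw [hx]; have := a.isLt; omega) (by rw [hx]; have := a.isLt; omega)
          (by rw [hy]; exact b.isLt), hx, hy]
        have := a.isLt
        have harg : 7*(g:ℤ) - 1 - ((6*g - n + (a:ℕ) : ℕ):ℤ) - (((b:ℕ):ℕ):ℤ)
            = (g:ℤ) + (n:ℤ) - 1 - ((a:ℕ):ℤ) - ((b:ℕ):ℤ) := by omega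
        rw [harg]
        simp only [Matrix.smul_apply, Bmat, smul_eq_mul]
      · show M ((f (Sum.inr a)).1.1.1) ((f (Sum.inr b)).1.1.1) = Amat g n C a b
        rw [hV22 _ _ (by rw [hx]; have := a.isLt; omega) (by rw [hy]; have := b.isLt; omega),
          hx, hy]
        have := a.isLt; have := b.isLt
        have harg : ((6*g - n + (a:ℕ) : ℕ):ℤ) - ((6*g - n + (b:ℕ) : ℕ):ℤ) - (g:ℤ)
            = ((a:ℕ):ℤ) - ((b:ℕ):ℤ) - (g:ℤ) := by omega
        rw [harg]
        rfl
    rw [hblock, det_fromBlocks_AB]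
  -- cardinalities
  have hcard3 : Fintype.card {i : {i : {i : Fin (8*g) // ¬ 6*g ≤ (i:ℕ)} //
      ¬(n ≤ ((i.1 : Fin (8*g)) : ℕ) ∧ ((i.1 : Fin (8*g)) : ℕ) < 4*g)} //
      (((i.1.1 : Fin (8*g)) : ℕ) < n ∨ 6*g ≤ ((i.1.1 : Fin (8*g)) : ℕ) + n)} = 2*n := by
    rw [← Fintype.card_congr e3, Fintype.card_sum, Fintype.card_fin]
    omega
  have t1 : Fintype.card {i : Fin (8*g) // ¬ 6*g ≤ (i:ℕ)}
      = Fintype.card (Fin (8*g)) - c1 := Fintype.card_subtype_compl _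
  have t2 : Fintype.card {i : {i : Fin (8*g) // ¬ 6*g ≤ (i:ℕ)} //
      ¬(n ≤ ((i.1 : Fin (8*g)) : ℕ) ∧ ((i.1 : Fin (8*g)) : ℕ) < 4*g)}
      = Fintype.card {i : Fin (8*g) // ¬ 6*g ≤ (i:ℕ)} - c2 := Fintype.card_subtype_compl _
  have t4 : c4 = Fintype.card {i : {i : Fin (8*g) // ¬ 6*g ≤ (i:ℕ)} //
      ¬(n ≤ ((i.1 : Fin (8*g)) : ℕ) ∧ ((i.1 : Fin (8*g)) : ℕ) < 4*g)} - 2*n := by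
    rw [hc4, ← hcard3]
    exact Fintype.card_subtype_compl _
  have b1 : c1 ≤ Fintype.card (Fin (8*g)) := Fintype.card_subtype_le _
  have b2 : c2 ≤ Fintype.card {i : Fin (8*g) // ¬ 6*g ≤ (i:ℕ)} := Fintype.card_subtype_le _
  have b3 : 2*n ≤ Fintype.card {i : {i : Fin (8*g) // ¬ 6*g ≤ (i:ℕ)} //
      ¬(n ≤ ((i.1 : Fin (8*g)) : ℕ) ∧ ((i.1 : Fin (8*g)) : ℕ) < 4*g)} := by
    rw [← hcard3]
    exact Fintype.card_subtype_le _
  have hfin : Fintype.card (Fin (8*g)) = 8*g := Fintype.card_fin _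
  have hsum : c1 + c2 + c4 = 8*g - 2*n := by omega
  rw [step1, step2, step3, hB1, hB2, hB3, hB4, ← hsum, pow_add, pow_add]
  ring

lemma E0p_sub (g n : ℕ) (hg : 1 ≤ g) (hn2 : n ≤ 2*g) (C : ℤ → ℝ) (h : n ≤ 8*g) :
    (E0p g C).submatrix (Fin.castLE h) (Fin.castLE h) = Amat g n C := by
  ext i j
  have hi := i.isLt
  have hj := j.isLt
  simp only [Matrix.submatrix_apply, E0p, Amat, Fin.coe_castLE]
  rw [if_pos (by constructor <;> intro <;> omega)]

lemma E0mJ8_sub (g n : ℕ) (hg : 1 ≤ g) (hn1 : 1 ≤ n) (hn2 : n ≤ 2*g) (C : ℤ → ℝ)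
    (h : n ≤ 8*g) :
    (E0m g C * J8 g n).submatrix (Fin.castLE h) (Fin.castLE h) = Bmat g n C := by
  ext i j
  have hi := i.isLt
  have hj := j.isLt
  simp only [Matrix.submatrix_apply, Matrix.mul_apply]
  rw [Finset.sum_eq_single (⟨n - 1 - (j:ℕ), by omega⟩ : Fin (8*g))]
  · simp only [E0m, J8, Fin.coe_castLE]
    rw [if_pos (show ((i:ℕ) < 4*g ↔ n - 1 - (j:ℕ) < 4*g) by constructor <;> intro <;> omega),
      if_pos (show n - 1 - (j:ℕ) + (j:ℕ) + 1 = n by omega), mul_one]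
    simp only [Bmat, Fin.coe_castLE]
    congr 1
    omega
  · intro k _ hk
    have hne : ¬((k:ℕ) + ((Fin.castLE h j : Fin (8*g)) : ℕ) + 1 = n) := by
      intro hc
      apply hk
      apply Fin.ext
      simp only [Fin.coe_castLE] at hc ⊢
      omega
    simp only [J8]
    rw [if_neg hne, mul_zero]
  · intro hmem
    exact absurd (Finset.mem_univ _) hmem

theorem stmt17 (g : ℕ) (hg : 1 ≤ g) (C : ℤ → ℝ)
    (hsupp : ∀ m : ℤ, g < m.natAbs → C m = 0) :
    ∀ n : ℕ, ∀ _hn1 : 1 ≤ n, ∀ hn2 : n ≤ 2*g,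
      (∀ ε : ℝ, ε = 1 ∨ ε = -1 →
        (E0p g C + ε • EnJ g C n).det =
          C (-(g : ℤ)) ^ (8*g - 2*n) *
            ((E0p g C + E0m g C * J8 g n).submatrix
              (Fin.castLE (by omega : n ≤ 8*g)) (Fin.castLE (by omega : n ≤ 8*g))).det *
            ((E0p g C - E0m g C * J8 g n).submatrix
              (Fin.castLE (by omega : n ≤ 8*g)) (Fin.castLE (by omega : n ≤ 8*g))).det) ∧
      (E0p g C + EnJ g C n).det = (E0p g C - EnJ g C n).det := by
  intro n hn1 hn2
  have h8 : n ≤ 8*g := by omega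
  have hTp : (E0p g C + E0m g C * J8 g n).submatrix
      (Fin.castLE (by omega : n ≤ 8*g)) (Fin.castLE (by omega : n ≤ 8*g))
      = Amat g n C + Bmat g n C := by
    ext i j
    have h1 := congrFun (congrFun (E0p_sub g n hg hn2 C h8) i) j
    have h2 := congrFun (congrFun (E0mJ8_sub g n hg hn1 hn2 C h8) i) j
    simp only [Matrix.submatrix_apply, Matrix.add_apply] at h1 h2 ⊢
    rw [h1, h2]
  have hTm : (E0p g C - E0m g C * J8 g n).submatrix
      (Fin.castLE (by omega : n ≤ 8*g)) (Fin.castLE (by omega : n ≤ 8*g))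
      = Amat g n C - Bmat g n C := by
    ext i j
    have h1 := congrFun (congrFun (E0p_sub g n hg hn2 C h8) i) j
    have h2 := congrFun (congrFun (E0mJ8_sub g n hg hn1 hn2 C h8) i) j
    simp only [Matrix.submatrix_apply, Matrix.sub_apply] at h1 h2 ⊢
    rw [h1, h2]
  constructor
  · intro ε hε
    rw [mainDet g n hg C hsupp hn1 hn2 ε, hTp, hTm]
    rcases hε with rfl | rfl
    · simp only [one_smul]
      ring
    · have e1 : Amat g n C + (-1 : ℝ) • Bmat g n C = Amat g n C - Bmat g n C := by
        rw [neg_one_smul, ← sub_eq_add_neg]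
      have e2 : Amat g n C - (-1 : ℝ) • Bmat g n C = Amat g n C + Bmat g n C := by
        rw [neg_one_smul, sub_neg_eq_add]
      rw [e1, e2]
      ring
  · have h1 := mainDet g n hg C hsupp hn1 hn2 1
    have h2 := mainDet g n hg C hsupp hn1 hn2 (-1)
    simp only [one_smul] at h1
    rw [neg_one_smul, neg_one_smul, ← sub_eq_add_neg, ← sub_eq_add_neg, sub_neg_eq_add] at h2
    rw [h1, h2]
    ring
end

section
/- For every 1 ≤ n ≤ 2g and each sign ε ∈ {+1, −1}: det(E₀⁺ + ε·E₀⁻·Jₙ^{(8g)}) = C(−g)^{4g}·det(e₀⁺ + ε·e₀⁻·Jₙ^{(4g)}) = C(−g)^{6g−1}·det(E⁺ + ε·E⁻·Jₙ^{(2g+1)}). -/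
open Matrix

/-- Entry formula for multiplication by the corner antidiagonal matrix `J`. -/
lemma mulJ {N n : ℕ} (hn : n ≤ N) (A J : Matrix (Fin N) (Fin N) ℝ)
    (hJ : ∀ a b : Fin N, J a b = if (a : ℕ) + (b : ℕ) + 1 = n then 1 else 0) (i j : Fin N) :
    (A * J) i j = if h : (j : ℕ) + 1 ≤ n then A i ⟨n - 1 - (j : ℕ), by omega⟩ else 0 := by
  rw [Matrix.mul_apply]
  by_cases h : (j : ℕ) + 1 ≤ n
  · rw [dif_pos h]
    rw [Finset.sum_eq_single (⟨n - 1 - (j : ℕ), by omega⟩ : Fin N)]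
    · have hc : (n - 1 - (j : ℕ)) + (j : ℕ) + 1 = n := by omega
      rw [hJ]
      simp [hc]
    · intro k _ hk
      rw [hJ]
      have : ¬((k : ℕ) + (j : ℕ) + 1 = n) := fun he => hk (Fin.ext (by simp; omega))
      simp [this]
    · intro hmem; exact absurd (Finset.mem_univ _) hmem
  · rw [dif_neg h]
    apply Finset.sum_eq_zero
    intro k _
    rw [hJ]
    have : ¬((k : ℕ) + (j : ℕ) + 1 = n) := by omega
    simp [this]

/-- The equiv onto the "top" (large index) part. -/
def eTop {k m N : ℕ} (h : k + m = N) : Fin m ≃ {i : Fin N // ¬((i : ℕ) < k)} where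
  toFun j := ⟨⟨k + (j : ℕ), by have := j.isLt; omega⟩, by simp⟩
  invFun i := ⟨(i : ℕ) - k, by have := i.2; have := i.1.isLt; omega⟩
  left_inv j := by apply Fin.ext; simp
  right_inv i := by apply Subtype.ext; apply Fin.ext; have := i.2; simp; omega

/-- The equiv onto the "bottom" (small index) part. -/
def eBot {k N : ℕ} (h : k ≤ N) : Fin k ≃ {i : Fin N // ¬¬((i : ℕ) < k)} where
  toFun j := ⟨⟨(j : ℕ), by have := j.isLt; omega⟩, not_not_intro j.isLt⟩
  invFun i := ⟨(i : ℕ), not_not.mp i.2⟩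
  left_inv j := rfl
  right_inv i := rfl

lemma det_sq {N m : ℕ} (M : Matrix (Fin N) (Fin N) ℝ) (p : Fin N → Prop) [DecidablePred p]
    (e : Fin m ≃ {i : Fin N // p i}) :
    (M.toSquareBlockProp p).det = Matrix.det (Matrix.of fun a b : Fin m => M (e a) (e b)) := by
  rw [← Matrix.det_submatrix_equiv_self e]
  rfl

lemma det_top {N k m : ℕ} (h : k + m = N) (M : Matrix (Fin N) (Fin N) ℝ) :
    (M.toSquareBlockProp (fun i => ¬((i : ℕ) < k))).det =
      (Matrix.of fun a b : Fin m =>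
        M ⟨k + (a : ℕ), by have := a.isLt; omega⟩ ⟨k + (b : ℕ), by have := b.isLt; omega⟩).det := by
  rw [det_sq M _ (eTop h)]
  rfl

lemma det_bot {N k : ℕ} (h : k ≤ N) (M : Matrix (Fin N) (Fin N) ℝ) :
    (M.toSquareBlockProp (fun i => ¬¬((i : ℕ) < k))).det =
      (Matrix.of fun a b : Fin k =>
        M ⟨(a : ℕ), by have := a.isLt; omega⟩ ⟨(b : ℕ), by have := b.isLt; omega⟩).det := by
  rw [det_sq M _ (eBot h)]
  rfl

lemma det_band {m g : ℕ} (C : ℤ → ℝ) (hsupp : ∀ mm : ℤ, g < mm.natAbs → C mm = 0)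
    (M : Matrix (Fin m) (Fin m) ℝ)
    (hM : ∀ a b : Fin m, M a b = C (((a : ℕ) : ℤ) - ((b : ℕ) : ℤ) - (g : ℤ))) :
    M.det = C (-(g : ℤ)) ^ m := by
  have hd : ∀ x : Fin m, M x x = C (-(g : ℤ)) := fun x => by rw [hM]; congr 1; ring
  rw [Matrix.det_of_lowerTriangular M (fun i j hij => by
    have hij' : (i : ℕ) < (j : ℕ) := hij
    rw [hM]
    exact hsupp _ (by omega))]
  rw [Finset.prod_congr rfl (fun x _ => hd x), Finset.prod_const, Finset.card_univ,
    Fintype.card_fin]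

theorem stmt19 (g : ℕ) (hg : 1 ≤ g) (C : ℤ → ℝ)
    (hsupp : ∀ m : ℤ, g < m.natAbs → C m = 0) :
    ∀ n : ℕ, 1 ≤ n → n ≤ 2*g → ∀ ε : ℝ, ε = 1 ∨ ε = -1 →
      (E0p g C + ε • (E0m g C * J8 g n)).det =
        C (-(g : ℤ)) ^ (4*g) * (e0p g C + ε • (e0m g C * J4 g n)).det ∧
      (E0p g C + ε • (E0m g C * J8 g n)).det =
        C (-(g : ℤ)) ^ (6*g - 1) * (Ep g C + ε • (Em g C * Jmat g n)).det := by
  intro n hn1 hn2 ε hε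
  have hJ8 : ∀ i j : Fin (8*g), (E0m g C * J8 g n) i j =
      if h : (j : ℕ) + 1 ≤ n then E0m g C i ⟨n - 1 - (j : ℕ), by omega⟩ else 0 :=
    mulJ (by omega) _ _ (fun a b => rfl)
  have hJ4 : ∀ i j : Fin (4*g), (e0m g C * J4 g n) i j =
      if h : (j : ℕ) + 1 ≤ n then e0m g C i ⟨n - 1 - (j : ℕ), by omega⟩ else 0 :=
    mulJ (by omega) _ _ (fun a b => rfl)
  have hJ2 : ∀ i j : Fin (2*g+1), (Em g C * Jmat g n) i j =
      if h : (j : ℕ) + 1 ≤ n then Em g C i ⟨n - 1 - (j : ℕ), by omega⟩ else 0 :=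
    mulJ (by omega) _ _ (fun a b => rfl)
  -- Step A : 8g ↦ 4g
  have hz8 : ∀ i : Fin (8*g), ¬¬((i : ℕ) < 4*g) → ∀ j : Fin (8*g), ¬((j : ℕ) < 4*g) →
      (E0p g C + ε • (E0m g C * J8 g n)) i j = 0 := by
    intro i hi j hj
    rw [not_not] at hi
    simp only [Matrix.add_apply, Matrix.smul_apply, smul_eq_mul, hJ8]
    simp only [E0p]
    rw [if_neg (by tauto), dif_neg (by omega)]
    ring
  have hA : (E0p g C + ε • (E0m g C * J8 g n)).det =
      C (-(g : ℤ)) ^ (4*g) * (e0p g C + ε • (e0m g C * J4 g n)).det := by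
    rw [Matrix.twoBlockTriangular_det _ (fun i : Fin (8*g) => ¬((i : ℕ) < 4*g)) hz8]
    rw [det_top (show 4*g + 4*g = 8*g by ring) _, det_bot (show 4*g ≤ 8*g by omega) _]
    congr 1
    · apply det_band C hsupp
      intro a b
      simp only [Matrix.of_apply, Matrix.add_apply, Matrix.smul_apply, smul_eq_mul, hJ8]
      simp only [E0p, Fin.val_mk]
      rw [if_pos (by constructor <;> intro h <;> omega), dif_neg (by omega), mul_zero, add_zero]
      congr 1
      push_cast
      ring
    · congr 1
      ext a b
      simp only [Matrix.of_apply, Matrix.add_apply, Matrix.smul_apply, smul_eq_mul, hJ8, hJ4]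
      simp only [E0p, E0m, e0p, e0m, Fin.val_mk]
      rw [if_pos (by constructor <;> intro h <;> [exact b.isLt; exact a.isLt])]
      by_cases hb : (b : ℕ) + 1 ≤ n
      · rw [dif_pos hb, dif_pos hb,
          if_pos (by constructor <;> intro h <;> [omega; exact a.isLt])]
      · rw [dif_neg hb, dif_neg hb]
  -- Step B : 4g ↦ 2g+1
  have hz4 : ∀ i : Fin (4*g), ¬¬((i : ℕ) < 2*g+1) → ∀ j : Fin (4*g), ¬((j : ℕ) < 2*g+1) →
      (e0p g C + ε • (e0m g C * J4 g n)) i j = 0 := by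
    intro i hi j hj
    rw [not_not] at hi
    simp only [Matrix.add_apply, Matrix.smul_apply, smul_eq_mul, hJ4]
    simp only [e0p]
    rw [dif_neg (by omega), mul_zero, add_zero]
    exact hsupp _ (by omega)
  have hB : (e0p g C + ε • (e0m g C * J4 g n)).det =
      C (-(g : ℤ)) ^ (2*g - 1) * (Ep g C + ε • (Em g C * Jmat g n)).det := by
    rw [Matrix.twoBlockTriangular_det _ (fun i : Fin (4*g) => ¬((i : ℕ) < 2*g+1)) hz4]
    rw [det_top (show (2*g+1) + (2*g-1) = 4*g by omega) _,
      det_bot (show 2*g+1 ≤ 4*g by omega) _]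
    congr 1
    · apply det_band C hsupp
      intro a b
      simp only [Matrix.of_apply, Matrix.add_apply, Matrix.smul_apply, smul_eq_mul, hJ4]
      simp only [e0p, Fin.val_mk]
      rw [dif_neg (by omega), mul_zero, add_zero]
      congr 1
      push_cast
      ring
    · congr 1
      ext a b
      simp only [Matrix.of_apply, Matrix.add_apply, Matrix.smul_apply, smul_eq_mul, hJ4, hJ2]
      simp only [e0p, e0m, Ep, Em, Fin.val_mk]
  refine ⟨hA, ?_⟩
  rw [hA, hB, ← mul_assoc, ← pow_add, show 4*g + (2*g - 1) = 6*g - 1 from by omega]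
end
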